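/- arXiv:1407.0465 — 4 statements merged into one kernel-verified Lean document; each statement's English description precedes it below -/
import Mathlib

section
/- Suppose α and β are real numbers with α < β, there exists x̄ ∈ ℝⁿ with α < h(x̄) < β, and in addition either A is positive semidefinite or B ≠ 0. Then (S₁) holds if and only if (S₂) holds. -/
open Matrix

/-- The quadratic function `x ↦ xᵀ M x + 2 mᵀ x + r`. -/
noncomputable def qfun {n : ℕ} (M : Matrix (Fin n) (Fin n) ℝ) (m : Fin n → ℝ) (r : ℝ)
    (x : Fin n → ℝ) : ℝ :=
  x ⬝ᵥ M *ᵥ x + 2 * (m ⬝ᵥ x) + r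


lemma dot_symm {n : ℕ} (M : Matrix (Fin n) (Fin n) ℝ) (hM : M.IsSymm) (x y : Fin n → ℝ) :
    x ⬝ᵥ M *ᵥ y = y ⬝ᵥ M *ᵥ x := by
  rw [dotProduct_mulVec, dotProduct_mulVec, dotProduct_comm, ← Matrix.mulVec_transpose, hM.eq,
    dotProduct_mulVec]

lemma qfun_line {n : ℕ} (M : Matrix (Fin n) (Fin n) ℝ) (hM : M.IsSymm) (m : Fin n → ℝ) (r : ℝ)
    (x v : Fin n → ℝ) (t : ℝ) :
    qfun M m r (x + t • v)
      = (v ⬝ᵥ M *ᵥ v) * t ^ 2 + (2 * (x ⬝ᵥ M *ᵥ v + m ⬝ᵥ v)) * t + qfun M m r x := by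
  have hsym := dot_symm M hM v x
  simp only [qfun, Matrix.mulVec_add, Matrix.mulVec_smul, dotProduct_add, add_dotProduct,
    dotProduct_smul, smul_dotProduct, smul_eq_mul]
  rw [hsym]; ring

lemma exists_large_neg (p q r : ℝ) (hp : p < 0) :
    ∃ S : ℝ, 0 ≤ S ∧ ∀ s : ℝ, S ≤ s → p * s ^ 2 + q * s + r < 0 := by
  have hp' : 0 < -p := by linarith
  refine ⟨(|q| + |r| + 1) / (-p) + 1, by positivity, fun s hs => ?_⟩
  have hq := le_abs_self q
  have hq' := neg_abs_le q
  have hr := le_abs_self r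
  have hS : (|q| + |r| + 1) ≤ (-p) * s - (-p) := by
    have := (div_le_iff₀ hp').mp (by linarith : (|q| + |r| + 1) / (-p) ≤ s - 1)
    linarith [this]
  have hs1 : 1 ≤ s := by
    have : 0 ≤ (|q| + |r| + 1) / (-p) := by positivity
    linarith
  nlinarith [abs_nonneg q, abs_nonneg r]

set_option maxHeartbeats 1000000

lemma exists_large_pos (p q r e : ℝ) (hp : 0 < p) :
    ∃ S : ℝ, 0 ≤ S ∧ ∀ s : ℝ, S ≤ s → e < p * s ^ 2 + q * s + r := by
  obtain ⟨S, hS0, hS⟩ := exists_large_neg (-p) (-q) (e - r) (by linarith)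
  exact ⟨S, hS0, fun s hs => by have := hS s hs; linarith⟩

/-- half-line version: if `ψ < 0` on `[0,∞)`, `φ` has positive leading coefficient,
`φ 0 < e`, and `ψ t < 0 → φ t ≠ e`, contradiction. -/
lemma key_half (p q r u v w e : ℝ) (hu : 0 < u) (hw : w < e)
    (hneg : ∀ t : ℝ, 0 ≤ t → p * t ^ 2 + q * t + r < 0)
    (hS : ∀ t : ℝ, p * t ^ 2 + q * t + r < 0 → u * t ^ 2 + v * t + w ≠ e) : False := by
  obtain ⟨T, hT0, hT⟩ := exists_large_pos u v w e hu
  have hcont : ContinuousOn (fun t : ℝ => u * t ^ 2 + v * t + w) (Set.Icc 0 T) := by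
    fun_prop
  have hmem : e ∈ Set.Icc ((fun t : ℝ => u * t ^ 2 + v * t + w) 0)
      ((fun t : ℝ => u * t ^ 2 + v * t + w) T) := by
    constructor
    · simpa using hw.le
    · exact (hT T le_rfl).le
  obtain ⟨t, ht, hte⟩ := intermediate_value_Icc hT0 hcont hmem
  exact hS t (hneg t ht.1) hte

lemma key1d (p q r u v w e : ℝ) (hp : p < 0) (hu : 0 < u) (hr : r < 0) (hw : w < e)
    (hS : ∀ t : ℝ, p * t ^ 2 + q * t + r < 0 → u * t ^ 2 + v * t + w ≠ e) : False := by
  by_cases hc : ∀ t : ℝ, 0 ≤ t → p * t ^ 2 + q * t + r < 0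
  · exact key_half p q r u v w e hu hw hc hS
  · push_neg at hc
    obtain ⟨T, hT0, hT⟩ := hc
    have hTpos : 0 < T := by
      rcases eq_or_lt_of_le hT0 with h | h
      · exfalso; rw [← h] at hT; simp at hT; linarith
      · exact h
    refine key_half p (-q) r u (-v) w e hu hw (fun t ht => ?_) (fun t hlt => ?_)
    · -- ψ(-t) < 0 for t ≥ 0, from concavity: ψ(T) ≥ 0, ψ(0)=r<0, p<0
      have key : T * (p * t ^ 2 + -q * t + r)
          = r * (T + t) - t * (p * T ^ 2 + q * T + r) + p * (T * t * (T + t)) := by ring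
      have h1 : r * (T + t) < 0 := mul_neg_of_neg_of_pos hr (by linarith)
      have h2 : 0 ≤ t * (p * T ^ 2 + q * T + r) := mul_nonneg ht hT
      have h3 : p * (T * t * (T + t)) ≤ 0 :=
        mul_nonpos_of_nonpos_of_nonneg hp.le
          (mul_nonneg (mul_nonneg hT0 ht) (by linarith))
      nlinarith [key, h1, h2, h3, mul_pos hTpos (show (0:ℝ) < 1 by norm_num)]
    · have := hS (-t) (by nlinarith)
      intro h; apply this; nlinarith

/-- cross inequality -/
lemma cross_ineq {V : Type*} [AddCommGroup V] [Module ℝ V]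
    (F G : V → ℝ) (BF BG : V → V → ℝ)
    (hF : ∀ x y : V, ∀ t : ℝ, F (x + t • y) = F x + 2 * t * BF x y + t ^ 2 * F y)
    (hG : ∀ x y : V, ∀ t : ℝ, G (x + t • y) = G x + 2 * t * BG x y + t ^ 2 * G y)
    (hyp : ∀ x, G x ≤ 0 → 0 ≤ F x)
    (x y : V) (hx : 0 < G x) (hy : G y < 0) :
    0 ≤ F x * (-G y) + F y * G x := by
  set gB := BG x y with hgB
  have hD : 0 < gB ^ 2 - G y * G x := by
    have := mul_pos hx (neg_pos.mpr hy)
    nlinarith [sq_nonneg gB]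
  set s := Real.sqrt (gB ^ 2 - G y * G x) with hs
  have hs2 : s ^ 2 = gB ^ 2 - G y * G x := Real.sq_sqrt hD.le
  have hspos : 0 < s := Real.sqrt_pos.mpr hD
  have hsg : |gB| < s := by
    have : |gB| ^ 2 < s ^ 2 := by rw [hs2, sq_abs]; nlinarith
    nlinarith [abs_nonneg gB]
  have habs1 := le_abs_self gB
  have habs2 := neg_abs_le gB
  set t0 : ℝ := (-gB - s) / G y with ht0def
  set t1 : ℝ := (-gB + s) / G y with ht1def
  have hGy : G y ≠ 0 := ne_of_lt hy
  have ht0pos : 0 < t0 := div_pos_of_neg_of_neg (by linarith) hy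
  have ht1neg : t1 < 0 := div_neg_of_pos_of_neg (by linarith) hy
  have hroot0 : G (x + t0 • y) = 0 := by
    rw [hG]; rw [ht0def]; field_simp; nlinarith [hs2]
  have hroot1 : G (x + t1 • y) = 0 := by
    rw [hG]; rw [ht1def]; field_simp; nlinarith [hs2]
  have hF0 : 0 ≤ F x + 2 * t0 * BF x y + t0 ^ 2 * F y := by
    have := hyp (x + t0 • y) (le_of_eq hroot0); rwa [hF] at this
  have hF1 : 0 ≤ F x + 2 * t1 * BF x y + t1 ^ 2 * F y := by
    have := hyp (x + t1 • y) (le_of_eq hroot1); rwa [hF] at this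
  have hprod : t0 * t1 * G y = G x := by
    rw [ht0def, ht1def]; field_simp; nlinarith [hs2]
  -- (−t1)·hF0 + t0·hF1 = (t0−t1)(F x − t0 t1 F y)
  have hcomb : 0 ≤ (t0 - t1) * (F x - t0 * t1 * F y) := by
    have h1 := mul_nonneg (by linarith : (0:ℝ) ≤ -t1) hF0
    have h2 := mul_nonneg ht0pos.le hF1
    nlinarith [h1, h2]
  have hlt : 0 < t0 - t1 := by linarith
  have hmain : 0 ≤ F x - t0 * t1 * F y := nonneg_of_mul_nonneg_right hcomb hlt
  -- multiply by (−G y) > 0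
  have h5 := mul_nonneg (by linarith : (0:ℝ) ≤ -G y) hmain
  have h6 : (-G y) * (F x - t0 * t1 * F y) = F x * (-G y) + F y * G x := by
    rw [← hprod]; ring
  linarith [h5, h6.symm ▸ h5]

lemma homog_slemma {V : Type*} [AddCommGroup V] [Module ℝ V]
    (F G : V → ℝ) (BF BG : V → V → ℝ)
    (hF : ∀ x y : V, ∀ t : ℝ, F (x + t • y) = F x + 2 * t * BF x y + t ^ 2 * F y)
    (hG : ∀ x y : V, ∀ t : ℝ, G (x + t • y) = G x + 2 * t * BG x y + t ^ 2 * G y)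
    (slater : ∃ z, G z < 0)
    (hyp : ∀ x, G x ≤ 0 → 0 ≤ F x) :
    ∃ l : ℝ, 0 ≤ l ∧ ∀ x, 0 ≤ F x + l * G x := by
  obtain ⟨z, hz⟩ := slater
  set T : Set ℝ := (fun y => F y / (-G y)) '' {y | G y < 0} with hT
  have hTne : T.Nonempty := ⟨_, ⟨z, hz, rfl⟩⟩
  have hTnonneg : ∀ c ∈ T, (0:ℝ) ≤ c := by
    rintro c ⟨y, hy, rfl⟩
    have hy' : G y < 0 := hy
    exact div_nonneg (hyp y hy'.le) (by linarith)
  have hTbdd : BddBelow T := ⟨0, fun c hc => hTnonneg c hc⟩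
  refine ⟨sInf T, le_csInf hTne hTnonneg, fun x => ?_⟩
  rcases lt_trichotomy (G x) 0 with hGx | hGx | hGx
  · have hle : sInf T ≤ F x / (-G x) := csInf_le hTbdd ⟨x, hGx, rfl⟩
    have hpos : (0:ℝ) < -G x := by linarith
    have h2 : sInf T * (-G x) ≤ F x := by
      have := (le_div_iff₀ hpos).mp hle; linarith
    nlinarith [h2]
  · rw [hGx]; simpa using hyp x hGx.le
  · have hge : (-F x) / (G x) ≤ sInf T := by
      apply le_csInf hTne
      rintro c ⟨y, hy, rfl⟩
      have hy' : G y < 0 := hy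
      have hc := cross_ineq F G BF BG hF hG hyp x y hGx hy'
      rw [div_le_div_iff₀ hGx (by linarith : (0:ℝ) < -G y)]
      nlinarith [hc]
    have h2 : -F x ≤ sInf T * G x := by
      have := (div_le_iff₀ hGx).mp hge; linarith
    linarith

/-- Nonhomogeneous S-lemma. -/
lemma slemma {n : ℕ} (A B : Matrix (Fin n) (Fin n) ℝ) (hA : A.IsSymm) (hB : B.IsSymm)
    (a b : Fin n → ℝ) (c d : ℝ)
    (slater : ∃ z, qfun B b d z < 0)
    (hyp : ∀ x, qfun B b d x ≤ 0 → 0 ≤ qfun A a c x) :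
    ∃ l : ℝ, 0 ≤ l ∧ ∀ x, 0 ≤ qfun A a c x + l * qfun B b d x := by
  obtain ⟨z, hz⟩ := slater
  classical
  set V := ((Fin n → ℝ) × ℝ)
  set F : V → ℝ := fun p => p.1 ⬝ᵥ A *ᵥ p.1 + 2 * (a ⬝ᵥ p.1) * p.2 + c * p.2 ^ 2 with hFdef
  set G : V → ℝ := fun p => p.1 ⬝ᵥ B *ᵥ p.1 + 2 * (b ⬝ᵥ p.1) * p.2 + d * p.2 ^ 2 with hGdef
  set BF : V → V → ℝ := fun p q =>
    p.1 ⬝ᵥ A *ᵥ q.1 + (a ⬝ᵥ p.1) * q.2 + (a ⬝ᵥ q.1) * p.2 + c * p.2 * q.2 with hBFdef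
  set BG : V → V → ℝ := fun p q =>
    p.1 ⬝ᵥ B *ᵥ q.1 + (b ⬝ᵥ p.1) * q.2 + (b ⬝ᵥ q.1) * p.2 + d * p.2 * q.2 with hBGdef
  have expand : ∀ (M : Matrix (Fin n) (Fin n) ℝ), M.IsSymm → ∀ (m : Fin n → ℝ) (r : ℝ),
      ∀ (p q : V) (t : ℝ),
      (p.1 + t • q.1) ⬝ᵥ M *ᵥ (p.1 + t • q.1) + 2 * (m ⬝ᵥ (p.1 + t • q.1)) * (p.2 + t * q.2)
        + r * (p.2 + t * q.2) ^ 2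
      = (p.1 ⬝ᵥ M *ᵥ p.1 + 2 * (m ⬝ᵥ p.1) * p.2 + r * p.2 ^ 2)
        + 2 * t * (p.1 ⬝ᵥ M *ᵥ q.1 + (m ⬝ᵥ p.1) * q.2 + (m ⬝ᵥ q.1) * p.2 + r * p.2 * q.2)
        + t ^ 2 * (q.1 ⬝ᵥ M *ᵥ q.1 + 2 * (m ⬝ᵥ q.1) * q.2 + r * q.2 ^ 2) := by
    intro M hM m r p q t
    have hsym := dot_symm M hM q.1 p.1
    simp only [Matrix.mulVec_add, Matrix.mulVec_smul, dotProduct_add, add_dotProduct,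
      dotProduct_smul, smul_dotProduct, smul_eq_mul]
    rw [hsym]; ring
  have hF : ∀ p q : V, ∀ t : ℝ, F (p + t • q) = F p + 2 * t * BF p q + t ^ 2 * F q := by
    intro p q t; exact expand A hA a c p q t
  have hG : ∀ p q : V, ∀ t : ℝ, G (p + t • q) = G p + 2 * t * BG p q + t ^ 2 * G q := by
    intro p q t; exact expand B hB b d p q t
  -- homogenized hypothesis
  have hyp' : ∀ p : V, G p ≤ 0 → 0 ≤ F p := by
    intro p hp
    by_cases ht : p.2 = 0
    · -- boundary case t = 0
      have hGp : p.1 ⬝ᵥ B *ᵥ p.1 ≤ 0 := by simpa [hGdef, ht] using hp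
      show (0:ℝ) ≤ F p
      have hFp : F p = p.1 ⬝ᵥ A *ᵥ p.1 := by simp [hFdef, ht]
      rw [hFp]
      by_contra hneg
      push_neg at hneg
      -- f(z + s • p.1) is eventually negative in s and in -s
      have hfline := fun s => qfun_line A hA a c z p.1 s
      have hgline := fun s => qfun_line B hB b d z p.1 s
      obtain ⟨S1, hS10, hS1⟩ := exists_large_neg (p.1 ⬝ᵥ A *ᵥ p.1)
        (2 * (z ⬝ᵥ A *ᵥ p.1 + a ⬝ᵥ p.1)) (qfun A a c z) hneg
      obtain ⟨S1', hS10', hS1'⟩ := exists_large_neg (p.1 ⬝ᵥ A *ᵥ p.1)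
        (-(2 * (z ⬝ᵥ A *ᵥ p.1 + a ⬝ᵥ p.1))) (qfun A a c z) hneg
      rcases lt_or_eq_of_le hGp with hBneg | hBzero
      · -- x⬝Bx < 0 : g eventually negative as s → ∞
        obtain ⟨S2, hS20, hS2⟩ := exists_large_neg (p.1 ⬝ᵥ B *ᵥ p.1)
          (2 * (z ⬝ᵥ B *ᵥ p.1 + b ⬝ᵥ p.1)) (qfun B b d z) hBneg
        set s := max S1 S2
        have h1 : qfun A a c (z + s • p.1) < 0 := by
          rw [hfline]; exact hS1 s (le_max_left _ _)
        have h2 : qfun B b d (z + s • p.1) < 0 := by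
          rw [hgline]; exact hS2 s (le_max_right _ _)
        exact absurd (hyp _ h2.le) (not_le.mpr h1)
      · -- x⬝Bx = 0 : g is affine along the line
        set K := z ⬝ᵥ B *ᵥ p.1 + b ⬝ᵥ p.1 with hK
        rcases le_or_gt K 0 with hKle | hKpos
        · set s := S1
          have h1 : qfun A a c (z + s • p.1) < 0 := by
            rw [hfline]; exact hS1 s le_rfl
          have h2 : qfun B b d (z + s • p.1) < 0 := by
            rw [hgline, ← hBzero]
            have : 2 * K * s ≤ 0 :=
              mul_nonpos_of_nonpos_of_nonneg (by linarith) hS10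
            nlinarith
          exact absurd (hyp _ h2.le) (not_le.mpr h1)
        · set s := -S1'
          have h1 : qfun A a c (z + s • p.1) < 0 := by
            have := hS1' S1' le_rfl
            have hs : s = -S1' := rfl
            rw [hfline, hs]; nlinarith
          have h2 : qfun B b d (z + s • p.1) < 0 := by
            rw [hgline, ← hBzero]
            have : 2 * K * s ≤ 0 := by
              apply mul_nonpos_of_nonneg_of_nonpos (by linarith)
              simp only [s]; linarith
            nlinarith
          exact absurd (hyp _ h2.le) (not_le.mpr h1)
    · -- t ≠ 0 : rescale
      have key : ∀ (M : Matrix (Fin n) (Fin n) ℝ) (m : Fin n → ℝ) (r : ℝ),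
          p.1 ⬝ᵥ M *ᵥ p.1 + 2 * (m ⬝ᵥ p.1) * p.2 + r * p.2 ^ 2
            = p.2 ^ 2 * qfun M m r (p.2⁻¹ • p.1) := by
        intro M m r
        simp only [qfun, Matrix.mulVec_smul, dotProduct_smul, smul_dotProduct, smul_eq_mul]
        field_simp
      have hgle : qfun B b d (p.2⁻¹ • p.1) ≤ 0 := by
        have hp' : p.2 ^ 2 * qfun B b d (p.2⁻¹ • p.1) ≤ 0 := by rw [← key]; exact hp
        have h2 : 0 < p.2 ^ 2 := by positivity
        nlinarith
      have := hyp _ hgle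
      show (0:ℝ) ≤ F p
      rw [hFdef]
      simp only []
      rw [key A a c]
      positivity
  obtain ⟨l, hl0, hl⟩ := homog_slemma F G BF BG hF hG ⟨(z, 1), by simpa [hGdef, qfun] using hz⟩ hyp'
  refine ⟨l, hl0, fun x => ?_⟩
  have := hl (x, 1)
  simpa [hFdef, hGdef, qfun] using this

lemma dot_line {n : ℕ} (M : Matrix (Fin n) (Fin n) ℝ) (hM : M.IsSymm) (x v : Fin n → ℝ) (t : ℝ) :
    (x + t • v) ⬝ᵥ M *ᵥ (x + t • v)
      = (v ⬝ᵥ M *ᵥ v) * t ^ 2 + (2 * (x ⬝ᵥ M *ᵥ v)) * t + x ⬝ᵥ M *ᵥ x := by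
  have hsym := dot_symm M hM v x
  simp only [Matrix.mulVec_add, Matrix.mulVec_smul, dotProduct_add, add_dotProduct,
    dotProduct_smul, smul_dotProduct, smul_eq_mul]
  rw [hsym]; ring

lemma perturb {n : ℕ} (A B : Matrix (Fin n) (Fin n) ℝ) (hA : A.IsSymm) (hB : B.IsSymm)
    (v w : Fin n → ℝ) (hv : v ⬝ᵥ A *ᵥ v < 0) (hw : w ⬝ᵥ B *ᵥ w ≠ 0) :
    ∃ u : Fin n → ℝ, u ⬝ᵥ A *ᵥ u < 0 ∧ u ⬝ᵥ B *ᵥ u ≠ 0 := by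
  by_cases h1 : v ⬝ᵥ B *ᵥ v ≠ 0
  · exact ⟨v, hv, h1⟩
  push_neg at h1
  set P := v ⬝ᵥ A *ᵥ w with hP
  set Q := w ⬝ᵥ A *ᵥ w with hQ
  set R := v ⬝ᵥ B *ᵥ w with hR
  set S := w ⬝ᵥ B *ᵥ w with hS
  set δ0 : ℝ := (-(v ⬝ᵥ A *ᵥ v)) / (2 * |P| + |Q| + 1) with hδ0
  have hδ0pos : 0 < δ0 := by
    apply div_pos (by linarith) (by positivity)
  set δ : ℝ := min δ0 1 with hδ
  have hδpos : 0 < δ := lt_min hδ0pos one_pos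
  have hδ1 : δ ≤ 1 := min_le_right _ _
  have hδδ0 : δ ≤ δ0 := min_le_left _ _
  set ε : ℝ := if δ = -2 * R / S then δ / 2 else δ with hε
  have hεpos : 0 < ε := by
    rw [hε]; split <;> linarith
  have hεδ : ε ≤ δ := by
    rw [hε]; split <;> linarith
  have hεne : ε ≠ -2 * R / S := by
    rw [hε]; split
    · rename_i h; rw [← h]; intro hc; linarith
    · assumption
  refine ⟨v + ε • w, ?_, ?_⟩
  · rw [dot_line A hA v w ε]
    have habsP := le_abs_self P
    have habsP' := neg_abs_le P
    have habsQ := le_abs_self Q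
    have habsQ' := neg_abs_le Q
    have key : δ * (2 * |P| + |Q| + 1) ≤ -(v ⬝ᵥ A *ᵥ v) := by
      rw [hδ0] at hδδ0
      have := (le_div_iff₀ (by positivity : (0:ℝ) < 2 * |P| + |Q| + 1)).mp hδδ0
      linarith
    have hε2 : ε ^ 2 ≤ ε := by nlinarith
    nlinarith [mul_nonneg hεpos.le (abs_nonneg P), mul_nonneg hεpos.le (abs_nonneg Q),
      mul_le_mul_of_nonneg_left hδ1 hεpos.le, sq_nonneg ε,
      mul_le_mul_of_nonneg_right hεδ (by positivity : (0:ℝ) ≤ 2 * |P| + |Q| + 1)]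
  · rw [dot_line B hB v w ε, h1]
    intro hc
    -- S ε² + 2R ε = 0 with ε ≠ 0 gives ε = -2R/S
    apply hεne
    have hSne : S ≠ 0 := hw
    field_simp
    nlinarith [hc, hεpos]

lemma qfun_shift {n : ℕ} (B : Matrix (Fin n) (Fin n) ℝ) (b : Fin n → ℝ) (d e : ℝ) (x : Fin n → ℝ) :
    qfun B b (d - e) x = qfun B b d x - e := by
  simp [qfun]; ring

lemma qfun_negflip {n : ℕ} (B : Matrix (Fin n) (Fin n) ℝ) (b : Fin n → ℝ) (d e : ℝ)
    (x : Fin n → ℝ) :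
    qfun (-B) (-b) (e - d) x = e - qfun B b d x := by
  simp [qfun, Matrix.neg_mulVec, dotProduct_neg, neg_dotProduct]; ring

/-- S-lemma with interval bounds, under the assumption that `A ⪰ 0` or `B ≠ 0`. -/
theorem s_lemma_interval_bounds (n : ℕ) (hn : 0 < n)
    (A B : Matrix (Fin n) (Fin n) ℝ) (hA : A.IsSymm) (hB : B.IsSymm)
    (a b : Fin n → ℝ) (c d : ℝ) (α β : ℝ) (hαβ : α < β)
    (hSlater : ∃ xbar : Fin n → ℝ, α < qfun B b d xbar ∧ qfun B b d xbar < β)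
    (hmain : A.PosSemidef ∨ B ≠ 0) :
    (¬ ∃ x : Fin n → ℝ, qfun A a c x < 0 ∧ α ≤ qfun B b d x ∧ qfun B b d x ≤ β) ↔
      (∃ μ : ℝ, ∀ x : Fin n → ℝ,
        qfun A a c x + (-(min μ 0)) * (qfun B b d x - β)
          + (max μ 0) * (α - qfun B b d x) ≥ 0) := by
  obtain ⟨xb, hxb1, hxb2⟩ := hSlater
  constructor
  · intro hS1
    by_cases h1 : ∃ x, qfun A a c x < 0 ∧ qfun B b d x ≤ β
    · by_cases h2 : ∃ x, qfun A a c x < 0 ∧ α ≤ qfun B b d x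
      · -- both feasible: contradiction
        exfalso
        obtain ⟨x1, hx1f, hx1h⟩ := h1
        obtain ⟨x2, hx2f, hx2h⟩ := h2
        have hx1α : qfun B b d x1 < α := by
          by_contra hcon; push_neg at hcon; exact hS1 ⟨x1, hx1f, hcon, hx1h⟩
        have hx2β : β < qfun B b d x2 := by
          by_contra hcon; push_neg at hcon; exact hS1 ⟨x2, hx2f, hx2h, hcon⟩
        by_cases hPSD : A.PosSemidef
        · -- A PSD: segment argument
          set v := x2 - x1 with hv
          have hx2eq : x1 + (1:ℝ) • v = x2 := by simp [hv]
          have hqB := fun t => qfun_line B hB b d x1 v t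
          have hqA := fun t => qfun_line A hA a c x1 v t
          have hvAv : 0 ≤ v ⬝ᵥ A *ᵥ v := by simpa using hPSD.dotProduct_mulVec_nonneg v
          have hcont : ContinuousOn
              (fun t : ℝ => (v ⬝ᵥ B *ᵥ v) * t ^ 2 + (2 * (x1 ⬝ᵥ B *ᵥ v + b ⬝ᵥ v)) * t
                + qfun B b d x1) (Set.Icc 0 1) := by fun_prop
          have hmem : α ∈ Set.Icc
              ((fun t : ℝ => (v ⬝ᵥ B *ᵥ v) * t ^ 2 + (2 * (x1 ⬝ᵥ B *ᵥ v + b ⬝ᵥ v)) * t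
                + qfun B b d x1) 0)
              ((fun t : ℝ => (v ⬝ᵥ B *ᵥ v) * t ^ 2 + (2 * (x1 ⬝ᵥ B *ᵥ v + b ⬝ᵥ v)) * t
                + qfun B b d x1) 1) := by
            constructor
            · simpa using hx1α.le
            · have := hqB 1
              rw [hx2eq] at this
              simp only []
              nlinarith [this, hx2β, hαβ]
          obtain ⟨t, ht, hte⟩ := intermediate_value_Icc (by norm_num : (0:ℝ) ≤ 1) hcont hmem
          have hhα : qfun B b d (x1 + t • v) = α := by rw [hqB t]; exact hte
          have hf2 : qfun A a c (x1 + (1:ℝ) • v) = qfun A a c x2 := by rw [hx2eq]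
          have hfexp := hqA 1
          rw [hx2eq] at hfexp
          have hft : qfun A a c (x1 + t • v) < 0 := by
            rw [hqA t]
            have key : v ⬝ᵥ A *ᵥ v * t ^ 2 + 2 * (x1 ⬝ᵥ A *ᵥ v + a ⬝ᵥ v) * t + qfun A a c x1
                = (1 - t) * qfun A a c x1 + t * qfun A a c x2 + (t ^ 2 - t) * (v ⬝ᵥ A *ᵥ v) := by
              rw [hfexp]; ring
            have hcomb : (1 - t) * qfun A a c x1 + t * qfun A a c x2 < 0 := by
              rcases eq_or_lt_of_le ht.1 with h | h
              · rw [← h]; simpa using hx1f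
              · have hp1 := mul_pos h (show (0:ℝ) < -(qfun A a c x2) by linarith)
                have hp2 := mul_nonneg (show (0:ℝ) ≤ 1 - t by linarith [ht.2])
                  (show (0:ℝ) ≤ -(qfun A a c x1) by linarith)
                nlinarith [hp1, hp2]
            have hlast : (t ^ 2 - t) * (v ⬝ᵥ A *ᵥ v) ≤ 0 :=
              mul_nonpos_of_nonpos_of_nonneg (by nlinarith [ht.1, ht.2]) hvAv
            linarith [key.le, hcomb, hlast]
          exact hS1 ⟨x1 + t • v, hft, by rw [hhα], by rw [hhα]; exact hαβ.le⟩
        · -- A not PSD, so B ≠ 0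
          have hBne : B ≠ 0 := hmain.resolve_left hPSD
          have hvex : ∃ v : Fin n → ℝ, v ⬝ᵥ A *ᵥ v < 0 := by
            rw [Matrix.posSemidef_iff_dotProduct_mulVec] at hPSD
            push_neg at hPSD
            have hherm : A.IsHermitian := by
              rw [Matrix.IsHermitian, conjTranspose_eq_transpose_of_trivial]; exact hA
            obtain ⟨v, hv⟩ := hPSD hherm
            exact ⟨v, by simpa using hv⟩
          have hwex : ∃ w : Fin n → ℝ, w ⬝ᵥ B *ᵥ w ≠ 0 := by
            by_contra hc
            push_neg at hc
            apply hBne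
            ext i j
            have hh1 := hc (Pi.single i 1 + Pi.single j 1)
            have hh2 := hc (Pi.single i 1)
            have hh3 := hc (Pi.single j 1)
            have hcross : Pi.single i 1 ⬝ᵥ B *ᵥ Pi.single j 1 = B i j := by
              simp [Matrix.mulVec, dotProduct, Pi.single_apply]
            have hcross' : Pi.single j 1 ⬝ᵥ B *ᵥ Pi.single i 1 = B j i := by
              simp [Matrix.mulVec, dotProduct, Pi.single_apply]
            have hsymm : B j i = B i j := congrFun (congrFun hB i) j
            simp only [Matrix.mulVec_add, dotProduct_add, add_dotProduct] at hh1
            rw [hcross, hcross'] at hh1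
            simp only [Matrix.zero_apply]
            linarith [hh1, hh2, hh3, hsymm]
          obtain ⟨v0, hv0⟩ := hvex
          obtain ⟨w0, hw0⟩ := hwex
          obtain ⟨u, huA, huB⟩ := perturb A B hA hB v0 w0 hv0 hw0
          have hqAl1 := fun t => qfun_line A hA a c x1 u t
          have hqBl1 := fun t => qfun_line B hB b d x1 u t
          have hqAl2 := fun t => qfun_line A hA a c x2 u t
          have hqBl2 := fun t => qfun_line B hB b d x2 u t
          rcases huB.lt_or_gt with hBneg | hBpos
          · -- u⬝Bu < 0: use x2, level β, flipped
            apply key1d (u ⬝ᵥ A *ᵥ u) (2 * (x2 ⬝ᵥ A *ᵥ u + a ⬝ᵥ u)) (qfun A a c x2)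
              (-(u ⬝ᵥ B *ᵥ u)) (-(2 * (x2 ⬝ᵥ B *ᵥ u + b ⬝ᵥ u))) (-(qfun B b d x2)) (-β)
              huA (by linarith) hx2f (by linarith)
            intro t hψ hφ
            have hft : qfun A a c (x2 + t • u) < 0 := by rw [hqAl2 t]; linarith [hψ]
            have hht : qfun B b d (x2 + t • u) = β := by
              have := hqBl2 t
              nlinarith [hφ, this]
            exact hS1 ⟨x2 + t • u, hft, by rw [hht]; exact hαβ.le, by rw [hht]⟩
          · -- u⬝Bu > 0: use x1, level α
            apply key1d (u ⬝ᵥ A *ᵥ u) (2 * (x1 ⬝ᵥ A *ᵥ u + a ⬝ᵥ u)) (qfun A a c x1)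
              (u ⬝ᵥ B *ᵥ u) (2 * (x1 ⬝ᵥ B *ᵥ u + b ⬝ᵥ u)) (qfun B b d x1) α
              huA hBpos hx1f hx1α
            intro t hψ hφ
            have hft : qfun A a c (x1 + t • u) < 0 := by rw [hqAl1 t]; exact hψ
            have hht : qfun B b d (x1 + t • u) = α := by rw [hqBl1 t]; exact hφ
            exact hS1 ⟨x1 + t • u, hft, by rw [hht], by rw [hht]; exact hαβ.le⟩
      · -- upper system infeasible? no: h1 holds, h2 fails: use g = α − h
        have hyp : ∀ x, qfun (-B) (-b) (α - d) x ≤ 0 → 0 ≤ qfun A a c x := by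
          intro x hx
          rw [qfun_negflip] at hx
          by_contra hc
          push_neg at hc
          exact h2 ⟨x, hc, by linarith⟩
        have hBsymm : (-B).IsSymm := by
          rw [Matrix.IsSymm] at *; simp [hB]
        obtain ⟨l, hl0, hl⟩ := slemma A (-B) hA hBsymm a (-b) c (α - d)
          ⟨xb, by rw [qfun_negflip]; linarith⟩ hyp
        refine ⟨l, fun x => ?_⟩
        have := hl x
        rw [qfun_negflip] at this
        rw [min_eq_right hl0, max_eq_left hl0]
        have hβeq : qfun A a c x + l * (α - qfun B b d x) + 0 * (qfun B b d x - β)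
            = qfun A a c x + l * (α - qfun B b d x) := by ring
        nlinarith [this]
    · -- lower system infeasible: use g = h − β
      have hyp : ∀ x, qfun B b (d - β) x ≤ 0 → 0 ≤ qfun A a c x := by
        intro x hx
        rw [qfun_shift] at hx
        by_contra hc
        push_neg at hc
        exact h1 ⟨x, hc, by linarith⟩
      obtain ⟨l, hl0, hl⟩ := slemma A B hA hB a b c (d - β)
        ⟨xb, by rw [qfun_shift]; linarith⟩ hyp
      refine ⟨-l, fun x => ?_⟩
      have := hl x
      rw [qfun_shift] at this
      rw [min_eq_left (by linarith : -l ≤ 0), max_eq_right (by linarith : -l ≤ 0)]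
      nlinarith [this]
  · rintro ⟨μ, hμ⟩ ⟨x, hf, hα', hβ'⟩
    have := hμ x
    have hm1 : (0:ℝ) ≤ -(min μ 0) := by
      simp only [neg_nonneg]; exact min_le_right _ _
    have hm2 : (0:ℝ) ≤ max μ 0 := le_max_right _ _
    have ht1 : (-(min μ 0)) * (qfun B b d x - β) ≤ 0 :=
      mul_nonpos_of_nonneg_of_nonpos hm1 (by linarith)
    have ht2 : (max μ 0) * (α - qfun B b d x) ≤ 0 :=
      mul_nonpos_of_nonneg_of_nonpos hm2 (by linarith)
    linarith
end

section
/- (S-lemma of Yakubovich) Suppose there exists x̄ ∈ ℝⁿ with h(x̄) < 0. Then the system f(x) < 0, h(x) ≤ 0 has no solution x ∈ ℝⁿ if and only if there exists a real number μ ≥ 0 such that f(x) + μ·h(x) ≥ 0 for all x ∈ ℝⁿ. -/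
open Matrix

noncomputable def homQ {n : ℕ} (M : Matrix (Fin n) (Fin n) ℝ) (m : Fin n → ℝ) (r : ℝ)
    (z : (Fin n → ℝ) × ℝ) : ℝ :=
  z.1 ⬝ᵥ M *ᵥ z.1 + 2 * z.2 * (m ⬝ᵥ z.1) + r * z.2 ^ 2

lemma homQ_smul {n : ℕ} (M : Matrix (Fin n) (Fin n) ℝ) (m : Fin n → ℝ) (r : ℝ)
    (s : ℝ) (z : (Fin n → ℝ) × ℝ) : homQ M m r (s • z) = s ^ 2 * homQ M m r z := by
  simp only [homQ, Prod.smul_fst, Prod.smul_snd, Matrix.mulVec_smul, smul_dotProduct,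
    dotProduct_smul, smul_eq_mul]
  ring

lemma homQ_pair {n : ℕ} (M : Matrix (Fin n) (Fin n) ℝ) (m : Fin n → ℝ) (r : ℝ)
    (z w : (Fin n → ℝ) × ℝ) : ∃ β : ℝ, ∀ s t : ℝ,
    homQ M m r (s • z + t • w)
      = s ^ 2 * homQ M m r z + 2 * s * t * β + t ^ 2 * homQ M m r w := by
  refine ⟨(z.1 ⬝ᵥ M *ᵥ w.1 + w.1 ⬝ᵥ M *ᵥ z.1) / 2 + z.2 * (m ⬝ᵥ w.1) + w.2 * (m ⬝ᵥ z.1)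
    + r * z.2 * w.2, fun s t => ?_⟩
  simp only [homQ, Prod.fst_add, Prod.snd_add, Prod.smul_fst, Prod.smul_snd,
    Matrix.mulVec_add, Matrix.mulVec_smul, add_dotProduct, dotProduct_add,
    smul_dotProduct, dotProduct_smul, smul_eq_mul]
  ring

lemma homQ_one {n : ℕ} (M : Matrix (Fin n) (Fin n) ℝ) (m : Fin n → ℝ) (r : ℝ)
    (x : Fin n → ℝ) : homQ M m r (x, 1) = qfun M m r x := by
  simp [homQ, qfun]

lemma homQ_zero_arg {n : ℕ} (M : Matrix (Fin n) (Fin n) ℝ) (m : Fin n → ℝ) (r : ℝ) :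
    homQ M m r 0 = 0 := by
  have := homQ_smul M m r 0 0
  simpa using this



section Dines
variable {V : Type*} [AddCommGroup V] [Module ℝ V]

lemma dines_seg (q1 q2 : V → ℝ)
    (h1 : ∀ (s : ℝ) z, q1 (s • z) = s ^ 2 * q1 z)
    (h2 : ∀ (s : ℝ) z, q2 (s • z) = s ^ 2 * q2 z)
    (u : ℝ → V) (P1 P2 Q1 Q2 p' q' a b : ℝ)
    (hp' : 0 ≤ p') (ha : 0 < a) (hb : 0 < b)
    (hu : ∀ r : ℝ, q1 (u r) = (1 + 2*r*p') * P1 + (r^2 + 2*r*q') * Q1 ∧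
                   q2 (u r) = (1 + 2*r*p') * P2 + (r^2 + 2*r*q') * Q2) :
    ∃ z, q1 z = a * P1 + b * Q1 ∧ q2 z = a * P2 + b * Q2 := by
  set φ : ℝ → ℝ := fun r => a * (r^2 + 2*r*q') - b * (1 + 2*r*p') with hφdef
  set R : ℝ := max 1 ((2*a*|q'| + 2*b*p' + b + 1) / a) with hRdef
  have hR1 : (1:ℝ) ≤ R := le_max_left _ _
  have hR0 : (0:ℝ) ≤ R := by linarith
  have hR2 : 2*a*|q'| + 2*b*p' + b + 1 ≤ a * R := by
    have := le_max_right 1 ((2*a*|q'| + 2*b*p' + b + 1) / a)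
    calc 2*a*|q'| + 2*b*p' + b + 1
        = a * ((2*a*|q'| + 2*b*p' + b + 1) / a) := by field_simp
      _ ≤ a * R := by exact mul_le_mul_of_nonneg_left this ha.le
  have hφ0 : φ 0 ≤ 0 := by simp [hφdef]; nlinarith
  have hφR : 0 ≤ φ R := by
    have f1 : R*(2*a*|q'| + 2*b*p' + b + 1) ≤ R*(a*R) :=
      mul_le_mul_of_nonneg_left hR2 hR0
    have f2 : 0 ≤ 2*a*R*(q' + |q'|) := by
      have : 0 ≤ q' + |q'| := by linarith [neg_abs_le q']
      positivity
    have f3 : b*1 ≤ b*R := mul_le_mul_of_nonneg_left hR1 hb.le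
    simp only [hφdef]
    nlinarith [f1, f2, f3]
  have hcont : ContinuousOn φ (Set.Icc 0 R) := by
    apply Continuous.continuousOn; fun_prop
  have h0mem : (0:ℝ) ∈ Set.Icc (φ 0) (φ R) := ⟨hφ0, hφR⟩
  obtain ⟨r, hrmem, hφr⟩ := intermediate_value_Icc hR0 hcont h0mem
  have hr0 : 0 ≤ r := hrmem.1
  have hc1 : 0 < 1 + 2*r*p' := by nlinarith
  have hkey : a * (r^2 + 2*r*q') = b * (1 + 2*r*p') := by
    have : φ r = 0 := hφr
    simp [hφdef] at this; linarith
  obtain ⟨hu1, hu2⟩ := hu r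
  have hdiv : 0 ≤ a / (1 + 2*r*p') := by positivity
  refine ⟨Real.sqrt (a / (1 + 2*r*p')) • u r, ?_, ?_⟩
  · rw [h1, Real.sq_sqrt hdiv, hu1]
    field_simp
    linear_combination Q1 * hkey
  · rw [h2, Real.sq_sqrt hdiv, hu2]
    field_simp
    linear_combination Q2 * hkey

/-- Dines' theorem (abstract form): the joint image of two quadratic maps is convex. -/
lemma dines_convex (q1 q2 : V → ℝ)
    (h1 : ∀ (s : ℝ) z, q1 (s • z) = s ^ 2 * q1 z)
    (h2 : ∀ (s : ℝ) z, q2 (s • z) = s ^ 2 * q2 z)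
    (hp : ∀ x y : V, ∃ b1 b2 : ℝ, ∀ s t : ℝ,
      q1 (s • x + t • y) = s^2 * q1 x + 2*s*t*b1 + t^2 * q1 y ∧
      q2 (s • x + t • y) = s^2 * q2 x + 2*s*t*b2 + t^2 * q2 y) :
    Convex ℝ {p : ℝ × ℝ | ∃ z, (q1 z, q2 z) = p} := by
  have hcone : ∀ c : ℝ, 0 ≤ c → ∀ z : V, ∃ w, q1 w = c * q1 z ∧ q2 w = c * q2 z := by
    intro c hc z
    exact ⟨Real.sqrt c • z, by rw [h1, Real.sq_sqrt hc], by rw [h2, Real.sq_sqrt hc]⟩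
  rintro p ⟨x, rfl⟩ q ⟨y, rfl⟩ aa bb ha hb hab
  suffices h : ∃ z, q1 z = aa * q1 x + bb * q1 y ∧ q2 z = aa * q2 x + bb * q2 y by
    obtain ⟨z, hz1, hz2⟩ := h
    exact ⟨z, by simp [Prod.ext_iff, hz1, hz2, smul_eq_mul]⟩
  rcases eq_or_lt_of_le ha with ha0 | ha
  · have hbb : bb = 1 := by linarith
    exact ⟨y, by rw [← ha0, hbb]; ring, by rw [← ha0, hbb]; ring⟩
  rcases eq_or_lt_of_le hb with hb0 | hb
  · have haa : aa = 1 := by linarith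
    exact ⟨x, by rw [← hb0, haa]; ring, by rw [← hb0, haa]; ring⟩
  set P1 := q1 x with hP1; set P2 := q2 x with hP2
  set Q1 := q1 y with hQ1; set Q2 := q2 y with hQ2
  obtain ⟨b1, b2, hb12⟩ := hp x y
  by_cases hdet : P1 * Q2 - P2 * Q1 = 0
  · -- dependent case
    have hdep : ∃ μ : ℝ, (P1 = μ * Q1 ∧ P2 = μ * Q2) ∨ (Q1 = μ * P1 ∧ Q2 = μ * P2) := by
      by_cases hq1 : Q1 = 0
      · by_cases hq2 : Q2 = 0
        · exact ⟨0, Or.inr ⟨by rw [hq1]; ring, by rw [hq2]; ring⟩⟩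
        · have hP10 : P1 = 0 := by
            have h' : P1 * Q2 = 0 := by rw [hq1] at hdet; linarith
            rcases mul_eq_zero.mp h' with h'' | h''
            · exact h''
            · exact absurd h'' hq2
          exact ⟨P2 / Q2, Or.inl ⟨by rw [hP10, hq1]; ring, by field_simp⟩⟩
      · refine ⟨P1 / Q1, Or.inl ⟨by field_simp, ?_⟩⟩
        have h' : P1 * Q2 = P2 * Q1 := by linarith
        field_simp
        linarith [h']
    obtain ⟨μ, hdep⟩ := hdep
    rcases hdep with ⟨hm1, hm2⟩ | ⟨hm1, hm2⟩
    · -- P = μ Q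
      by_cases hc : 0 ≤ aa * μ + bb
      · obtain ⟨w, hw1, hw2⟩ := hcone (aa * μ + bb) hc y
        exact ⟨w, by rw [hw1, hm1, ← hQ1]; ring, by rw [hw2, hm2, ← hQ2]; ring⟩
      · push_neg at hc
        have hμ : μ < 0 := by nlinarith
        have hcc : 0 ≤ (aa * μ + bb) / μ := le_of_lt (div_pos_of_neg_of_neg hc hμ)
        obtain ⟨w, hw1, hw2⟩ := hcone ((aa * μ + bb) / μ) hcc x
        refine ⟨w, ?_, ?_⟩
        · rw [hw1, ← hP1, hm1]; field_simp [hμ.ne]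
        · rw [hw2, ← hP2, hm2]; field_simp [hμ.ne]
    · -- Q = μ P
      by_cases hc : 0 ≤ aa + bb * μ
      · obtain ⟨w, hw1, hw2⟩ := hcone (aa + bb * μ) hc x
        exact ⟨w, by rw [hw1, hm1, ← hP1]; ring, by rw [hw2, hm2, ← hP2]; ring⟩
      · push_neg at hc
        have hμ : μ < 0 := by nlinarith
        have hcc : 0 ≤ (aa + bb * μ) / μ := le_of_lt (div_pos_of_neg_of_neg hc hμ)
        obtain ⟨w, hw1, hw2⟩ := hcone ((aa + bb * μ) / μ) hcc y
        refine ⟨w, ?_, ?_⟩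
        · rw [hw1, ← hQ1, hm1]; field_simp [hμ.ne]
        · rw [hw2, ← hQ2, hm2]; field_simp [hμ.ne]
  · -- independent case: decompose (b1, b2) in the basis (P, Q)
    set D := P1 * Q2 - P2 * Q1 with hD
    set pp := (b1 * Q2 - b2 * Q1) / D with hpp
    set qq := (P1 * b2 - P2 * b1) / D with hqq
    have hd1 : b1 = pp * P1 + qq * Q1 := by
      rw [hpp, hqq, div_mul_eq_mul_div, div_mul_eq_mul_div, ← add_div, eq_div_iff hdet, hD]; ring
    have hd2 : b2 = pp * P2 + qq * Q2 := by
      rw [hpp, hqq, div_mul_eq_mul_div, div_mul_eq_mul_div, ← add_div, eq_div_iff hdet, hD]; ring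
    rcases le_or_gt 0 pp with hsgn | hsgn
    · apply dines_seg q1 q2 h1 h2 (fun r => (1:ℝ) • x + r • y) P1 P2 Q1 Q2 pp qq aa bb
        hsgn ha hb
      intro r
      obtain ⟨e1, e2⟩ := hb12 1 r
      constructor
      · rw [e1, hd1]; ring
      · rw [e2, hd2]; ring
    · apply dines_seg q1 q2 h1 h2 (fun r => (1:ℝ) • x + (-r) • y) P1 P2 Q1 Q2 (-pp) (-qq) aa bb
        (by linarith) ha hb
      intro r
      obtain ⟨e1, e2⟩ := hb12 1 (-r)
      constructor
      · rw [e1, hd1]; ring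
      · rw [e2, hd2]; ring
end Dines

lemma quad_eventually_neg (K L M : ℝ) (hK : K < 0) :
    ∃ s : ℝ, ∀ s' : ℝ, s ≤ s' → M + L * s' + K * s' ^ 2 < 0 := by
  refine ⟨max 1 ((|L| + |M| + 1) / (-K)), fun s' hs' => ?_⟩
  have h1 : 1 ≤ s' := le_trans (le_max_left _ _) hs'
  have h0 : 0 ≤ s' := by linarith
  have h2 : (|L| + |M| + 1) / (-K) ≤ s' := le_trans (le_max_right _ _) hs'
  have h3 : |L| + |M| + 1 ≤ s' * (-K) := by
    rw [div_le_iff₀ (by linarith : (0:ℝ) < -K)] at h2; linarith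
  nlinarith [mul_le_mul_of_nonneg_left h3 h0, mul_le_mul_of_nonneg_left (le_abs_self L) h0,
    le_abs_self M, abs_nonneg M, abs_nonneg L, mul_le_mul_of_nonneg_right h1 (abs_nonneg M)]

theorem s_lemma_aux (n : ℕ)
    (A B : Matrix (Fin n) (Fin n) ℝ)
    (a b : Fin n → ℝ) (c d : ℝ)
    (hSlater : ∃ xbar : Fin n → ℝ, qfun B b d xbar < 0) :
    (¬ ∃ x : Fin n → ℝ, qfun A a c x < 0 ∧ qfun B b d x ≤ 0) ↔
      (∃ μ : ℝ, 0 ≤ μ ∧ ∀ x : Fin n → ℝ, qfun A a c x + μ * qfun B b d x ≥ 0) := by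
  obtain ⟨xbar, hxbar⟩ := hSlater
  constructor
  · intro hno
    -- Step 1: the homogenized system has no strict solution
    have hhom : ∀ z : (Fin n → ℝ) × ℝ, ¬(homQ A a c z < 0 ∧ homQ B b d z < 0) := by
      rintro ⟨x, t⟩ ⟨hF, hH⟩
      by_cases ht : t = 0
      · subst ht
        obtain ⟨β1, hβ1⟩ := homQ_pair A a c (xbar, 1) (x, 0)
        obtain ⟨β2, hβ2⟩ := homQ_pair B b d (xbar, 1) (x, 0)
        obtain ⟨s1, hs1⟩ := quad_eventually_neg (homQ A a c (x, 0)) (2 * β1)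
          (homQ A a c (xbar, 1)) hF
        obtain ⟨s2, hs2⟩ := quad_eventually_neg (homQ B b d (x, 0)) (2 * β2)
          (homQ B b d (xbar, 1)) hH
        set s := max s1 s2 with hsdef
        have hz : ((xbar + s • x, (1:ℝ)) : (Fin n → ℝ) × ℝ)
            = (1:ℝ) • ((xbar, (1:ℝ)) : (Fin n → ℝ) × ℝ) + s • ((x, (0:ℝ))) := by
          simp [Prod.ext_iff]
        refine hno ⟨xbar + s • x, ?_, le_of_lt ?_⟩
        · calc qfun A a c (xbar + s • x) = homQ A a c (xbar + s • x, 1) :=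
                (homQ_one A a c _).symm
            _ = 1 ^ 2 * homQ A a c (xbar, 1) + 2 * 1 * s * β1 + s ^ 2 * homQ A a c (x, 0) := by
                rw [hz]; exact hβ1 1 s
            _ = homQ A a c (xbar, 1) + (2 * β1) * s + homQ A a c (x, 0) * s ^ 2 := by ring
            _ < 0 := hs1 s (le_max_left _ _)
        · calc qfun B b d (xbar + s • x) = homQ B b d (xbar + s • x, 1) :=
                (homQ_one B b d _).symm
            _ = 1 ^ 2 * homQ B b d (xbar, 1) + 2 * 1 * s * β2 + s ^ 2 * homQ B b d (x, 0) := by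
                rw [hz]; exact hβ2 1 s
            _ = homQ B b d (xbar, 1) + (2 * β2) * s + homQ B b d (x, 0) * s ^ 2 := by ring
            _ < 0 := hs2 s (le_max_right _ _)
      · have hinv : t⁻¹ ≠ 0 := inv_ne_zero ht
        have hz : ((t⁻¹ • x, (1:ℝ)) : (Fin n → ℝ) × ℝ) = t⁻¹ • ((x, t)) := by
          simp [Prod.ext_iff, inv_mul_cancel₀ ht]
        have hpos : (0:ℝ) < (t⁻¹) ^ 2 := by positivity
        refine hno ⟨t⁻¹ • x, ?_, le_of_lt ?_⟩
        · rw [← homQ_one, hz, homQ_smul]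
          exact mul_neg_of_pos_of_neg hpos hF
        · rw [← homQ_one, hz, homQ_smul]
          exact mul_neg_of_pos_of_neg hpos hH
    -- Step 2: separation
    set S : Set (ℝ × ℝ) :=
      {p | ∃ z : (Fin n → ℝ) × ℝ, (homQ A a c z, homQ B b d z) = p} with hSdef
    have hSconv : Convex ℝ S := by
      apply dines_convex _ _ (homQ_smul A a c) (homQ_smul B b d)
      intro x y
      obtain ⟨β1, hβ1⟩ := homQ_pair A a c x y
      obtain ⟨β2, hβ2⟩ := homQ_pair B b d x y
      exact ⟨β1, β2, fun s t => ⟨hβ1 s t, hβ2 s t⟩⟩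
    set C : Set (ℝ × ℝ) := Set.Iio (0:ℝ) ×ˢ Set.Iio (0:ℝ) with hCdef
    have hCopen : IsOpen C := isOpen_Iio.prod isOpen_Iio
    have hCconv : Convex ℝ C := (convex_Iio (0:ℝ)).prod (convex_Iio (0:ℝ))
    have hdisj : Disjoint C S := by
      rw [Set.disjoint_left]
      rintro p hp ⟨z, hz⟩
      obtain ⟨hp1, hp2⟩ := hp
      exact hhom z ⟨by rw [show homQ A a c z = p.1 from congrArg Prod.fst hz]; exact hp1,
        by rw [show homQ B b d z = p.2 from congrArg Prod.snd hz]; exact hp2⟩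
    obtain ⟨φ, u, hCu, hSu⟩ := geometric_hahn_banach_open hCconv hCopen hSconv hdisj
    set α : ℝ := φ (1, 0) with hαdef
    set β : ℝ := φ (0, 1) with hβdef
    have hφ : ∀ p : ℝ × ℝ, φ p = p.1 * α + p.2 * β := by
      intro p
      have hrep : p = p.1 • ((1, 0) : ℝ × ℝ) + p.2 • ((0, 1) : ℝ × ℝ) := by
        simp [Prod.ext_iff]
      calc φ p = φ (p.1 • ((1, 0) : ℝ × ℝ) + p.2 • ((0, 1) : ℝ × ℝ)) := by rw [← hrep]
        _ = p.1 * α + p.2 * β := by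
            rw [map_add, _root_.map_smul, _root_.map_smul, smul_eq_mul, smul_eq_mul]
    have hu0 : u ≤ 0 := by
      have h0S : ((0:ℝ), (0:ℝ)) ∈ S := ⟨0, by rw [homQ_zero_arg, homQ_zero_arg]⟩
      have := hSu _ h0S
      rwa [show ((0:ℝ), (0:ℝ)) = (0 : ℝ × ℝ) from rfl, map_zero] at this
    have hSnonneg : ∀ z : (Fin n → ℝ) × ℝ, 0 ≤ α * homQ A a c z + β * homQ B b d z := by
      intro z
      by_contra hneg
      push_neg at hneg
      set v : ℝ := α * homQ A a c z + β * homQ B b d z with hvdef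
      have hv : v < 0 := hneg
      set t : ℝ := (u - 1) / v with htdef
      have ht : 0 < t := div_pos_of_neg_of_neg (by linarith) hv
      have hw : ((t * homQ A a c z, t * homQ B b d z) : ℝ × ℝ) ∈ S := by
        refine ⟨Real.sqrt t • z, ?_⟩
        rw [homQ_smul, homQ_smul, Real.sq_sqrt ht.le]
      have h1 := hSu _ hw
      rw [hφ] at h1
      have h2 : t * homQ A a c z * α + t * homQ B b d z * β = u - 1 := by
        have : t * v = u - 1 := by
          rw [htdef]; exact div_mul_cancel₀ (u - 1) hv.ne
        rw [hvdef] at this; linarith [this]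
      rw [h2] at h1
      linarith
    have hCnonpos : ∀ p : ℝ × ℝ, p.1 < 0 → p.2 < 0 → φ p ≤ 0 := by
      intro p h1 h2
      by_contra hpos
      push_neg at hpos
      set t : ℝ := (|u| + 1) / φ p with htdef
      have ht : 0 < t := by positivity
      have htp : t • p ∈ C := by
        refine Set.mem_prod.mpr ⟨?_, ?_⟩ <;>
          simp only [Prod.smul_fst, Prod.smul_snd, smul_eq_mul, Set.mem_Iio]
        · exact mul_neg_of_pos_of_neg ht h1
        · exact mul_neg_of_pos_of_neg ht h2
      have h3 := hCu _ htp
      have h4 : φ (t • p) = |u| + 1 := by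
        rw [_root_.map_smul, smul_eq_mul, htdef]
        field_simp
      rw [h4] at h3
      linarith [le_abs_self u]
    have hm11 : ((-1, -1) : ℝ × ℝ) ∈ C := Set.mem_prod.mpr ⟨by norm_num, by norm_num⟩
    have hsum : 0 < α + β := by
      have := hCu _ hm11
      rw [hφ] at this
      simp only at this
      linarith
    have hα : 0 ≤ α := by
      by_contra hαneg
      push_neg at hαneg
      rcases le_or_gt β 0 with hβ' | hβ'
      · linarith
      · have hε : (0:ℝ) < -α / (2 * β) := div_pos (by linarith) (by linarith)
        have := hCnonpos (-1, -(-α / (2 * β))) (by norm_num) (by linarith)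
        rw [hφ] at this
        simp only at this
        have hεβ : -α / (2 * β) * β = -α / 2 := by field_simp
        nlinarith
    have hβ : 0 ≤ β := by
      by_contra hβneg
      push_neg at hβneg
      rcases le_or_gt α 0 with hα' | hα'
      · linarith
      · have hε : (0:ℝ) < -β / (2 * α) := div_pos (by linarith) (by linarith)
        have := hCnonpos (-(-β / (2 * α)), -1) (by linarith) (by norm_num)
        rw [hφ] at this
        simp only at this
        have hεα : -β / (2 * α) * α = -β / 2 := by field_simp
        nlinarith
    have hαpos : 0 < α := by
      rcases eq_or_lt_of_le hα with h0 | h0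
      · exfalso
        have hβpos : 0 < β := by linarith
        have := hSnonneg (xbar, 1)
        rw [homQ_one, homQ_one, ← h0] at this
        nlinarith
      · exact h0
    refine ⟨β / α, div_nonneg hβ hαpos.le, fun x => ?_⟩
    have h2 := hSnonneg (x, 1)
    rw [homQ_one, homQ_one] at h2
    have heq : qfun A a c x + β / α * qfun B b d x
        = (α * qfun A a c x + β * qfun B b d x) / α := by
      field_simp
    rw [ge_iff_le, heq]
    exact div_nonneg h2 hαpos.le
  · rintro ⟨μ, hμ, hineq⟩ ⟨x, hf, hh⟩
    have h1 := hineq x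
    nlinarith [mul_nonneg hμ (neg_nonneg.mpr hh)]

/-- The S-lemma of Yakubovich. -/
theorem s_lemma (n : ℕ) (hn : 0 < n)
    (A B : Matrix (Fin n) (Fin n) ℝ) (hA : A.IsSymm) (hB : B.IsSymm)
    (a b : Fin n → ℝ) (c d : ℝ)
    (hSlater : ∃ xbar : Fin n → ℝ, qfun B b d xbar < 0) :
    (¬ ∃ x : Fin n → ℝ, qfun A a c x < 0 ∧ qfun B b d x ≤ 0) ↔
      (∃ μ : ℝ, 0 ≤ μ ∧ ∀ x : Fin n → ℝ, qfun A a c x + μ * qfun B b d x ≥ 0) :=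
  s_lemma_aux n A B a b c d hSlater
end

section
/- (Polyak) Suppose n ≥ 3, f_i(x) = xᵀA_i x for real symmetric n×n matrices A_0, A_1, A_2, and α_0, α_1, α_2 are real numbers. Suppose there exist μ_1, μ_2 ∈ ℝ with μ_1 A_1 + μ_2 A_2 positive definite, and there exists x⁰ ∈ ℝⁿ with f_1(x⁰) < α_1 and f_2(x⁰) < α_2. Then the system f_0(x) < α_0, f_1(x) ≤ α_1, f_2(x) ≤ α_2 has no solution x ∈ ℝⁿ if and only if there exist τ_1 ≥ 0 and τ_2 ≥ 0 such that A_0 + τ_1 A_1 + τ_2 A_2 is positive semidefinite and α_0 + τ_1 α_1 + τ_2 α_2 ≤ 0. -/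
open Matrix

namespace PolyakAux

variable {n : ℕ}

noncomputable def qf (M : Matrix (Fin n) (Fin n) ℝ) (x : Fin n → ℝ) : ℝ := x ⬝ᵥ M *ᵥ x
noncomputable def bf (M : Matrix (Fin n) (Fin n) ℝ) (x y : Fin n → ℝ) : ℝ := x ⬝ᵥ M *ᵥ y

lemma qf_eq_bf (M : Matrix (Fin n) (Fin n) ℝ) (x : Fin n → ℝ) : qf M x = bf M x x := rfl

lemma bf_comm {M : Matrix (Fin n) (Fin n) ℝ} (hM : M.IsSymm) (x y : Fin n → ℝ) :
    bf M x y = bf M y x := by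
  unfold bf
  rw [Matrix.dotProduct_mulVec, ← Matrix.mulVec_transpose, hM.eq, dotProduct_comm]

lemma bf_add_left (M : Matrix (Fin n) (Fin n) ℝ) (x y z : Fin n → ℝ) :
    bf M (x + y) z = bf M x z + bf M y z := by simp [bf, add_dotProduct]

lemma bf_smul_left (M : Matrix (Fin n) (Fin n) ℝ) (a : ℝ) (x z : Fin n → ℝ) :
    bf M (a • x) z = a * bf M x z := by simp [bf, smul_dotProduct]

lemma bf_add_right (M : Matrix (Fin n) (Fin n) ℝ) (x y z : Fin n → ℝ) :
    bf M x (y + z) = bf M x y + bf M x z := by simp [bf, mulVec_add, dotProduct_add]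

lemma bf_smul_right (M : Matrix (Fin n) (Fin n) ℝ) (a : ℝ) (x z : Fin n → ℝ) :
    bf M x (a • z) = a * bf M x z := by simp [bf, mulVec_smul, dotProduct_smul]

lemma bf_neg_right (M : Matrix (Fin n) (Fin n) ℝ) (x z : Fin n → ℝ) :
    bf M x (-z) = - bf M x z := by
  have := bf_smul_right M (-1) x z; simpa using this

lemma qf_smul (M : Matrix (Fin n) (Fin n) ℝ) (a : ℝ) (x : Fin n → ℝ) :
    qf M (a • x) = a ^ 2 * qf M x := by
  simp [qf_eq_bf, bf_smul_left, bf_smul_right]; ring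

lemma qf_neg (M : Matrix (Fin n) (Fin n) ℝ) (x : Fin n → ℝ) : qf M (-x) = qf M x := by
  have := qf_smul M (-1) x; simpa using this

lemma qf_zero (M : Matrix (Fin n) (Fin n) ℝ) : qf M (0 : Fin n → ℝ) = 0 := by simp [qf]

lemma qf_expand2 {M : Matrix (Fin n) (Fin n) ℝ} (hM : M.IsSymm) (a b : ℝ) (x y : Fin n → ℝ) :
    qf M (a • x + b • y) =
      a ^ 2 * qf M x + b ^ 2 * qf M y + 2 * a * b * bf M x y := by
  simp only [qf_eq_bf, bf_add_left, bf_add_right, bf_smul_left, bf_smul_right]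
  rw [bf_comm hM y x]; ring

lemma qf_expand3 {M : Matrix (Fin n) (Fin n) ℝ} (hM : M.IsSymm) (a b c : ℝ) (x y z : Fin n → ℝ) :
    qf M (a • x + b • y + c • z) =
      a ^ 2 * qf M x + b ^ 2 * qf M y + c ^ 2 * qf M z +
        2 * a * b * bf M x y + 2 * a * c * bf M x z + 2 * b * c * bf M y z := by
  simp only [qf_eq_bf, bf_add_left, bf_add_right, bf_smul_left, bf_smul_right]
  rw [bf_comm hM y x, bf_comm hM z x, bf_comm hM z y]; ring

lemma qf_matrix_add (M N : Matrix (Fin n) (Fin n) ℝ) (x : Fin n → ℝ) :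
    qf (M + N) x = qf M x + qf N x := by simp [qf, add_mulVec, dotProduct_add]

lemma qf_matrix_smul (a : ℝ) (M : Matrix (Fin n) (Fin n) ℝ) (x : Fin n → ℝ) :
    qf (a • M) x = a * qf M x := by simp [qf, smul_mulVec, dotProduct_smul]

lemma qf_continuous (M : Matrix (Fin n) (Fin n) ℝ) :
    Continuous (fun x : Fin n → ℝ => qf M x) := by
  simp only [qf, dotProduct, mulVec]; fun_prop

lemma bf_lin_right (M : Matrix (Fin n) (Fin n) ℝ) (y : Fin n → ℝ) :
    ∃ φ : (Fin n → ℝ) →ₗ[ℝ] ℝ, ∀ v, φ v = bf M y v :=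
  ⟨{ toFun := fun v => bf M y v,
     map_add' := fun u v => bf_add_right M y u v,
     map_smul' := fun a v => by simpa using bf_smul_right M a y v }, fun _ => rfl⟩

/-- Existence of a nonzero vector `bf`-orthogonal to two given vectors, for `n ≥ 3`. -/
lemma exists_orth (hn : 3 ≤ n) (M : Matrix (Fin n) (Fin n) ℝ) (y z : Fin n → ℝ) :
    ∃ u : Fin n → ℝ, u ≠ 0 ∧ bf M y u = 0 ∧ bf M z u = 0 := by
  obtain ⟨φ₁, hφ₁⟩ := bf_lin_right M y
  obtain ⟨φ₂, hφ₂⟩ := bf_lin_right M z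
  set Φ : (Fin n → ℝ) →ₗ[ℝ] ℝ × ℝ := φ₁.prod φ₂ with hΦ
  by_cases hker : LinearMap.ker Φ = ⊥
  · exfalso
    have hinj : Function.Injective Φ := LinearMap.ker_eq_bot.mp hker
    have := LinearMap.finrank_le_finrank_of_injective hinj
    simp [Module.finrank_prod] at this
    omega
  · obtain ⟨u, hu, hu0⟩ := Submodule.exists_mem_ne_zero_of_ne_bot hker
    refine ⟨u, hu0, ?_, ?_⟩
    · have h : Φ u = 0 := hu
      rw [hΦ] at h
      have h1 : φ₁ u = 0 := congrArg Prod.fst h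
      rw [← hφ₁ u]; exact h1
    · have h : Φ u = 0 := hu
      rw [hΦ] at h
      have h2 : φ₂ u = 0 := congrArg Prod.snd h
      rw [← hφ₂ u]; exact h2

/-- Case of the connectivity lemma with an auxiliary vector `u` on which the form
does not vanish. -/
lemma pathA_aux {Q : Matrix (Fin n) (Fin n) ℝ} (hQ : Q.IsSymm)
    {y z' u : Fin n → ℝ} (hy : y ≠ 0)
    (hqy : qf Q y = 0) (hqz' : qf Q z' = 0)
    (hyu : bf Q y u = 0) (hz'u : bf Q z' u = 0) (hqu : qf Q u ≠ 0)
    (heneg : bf Q y z' * qf Q u < 0) :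
    ∃ γ : ℝ → (Fin n → ℝ), Continuous γ ∧ γ 0 = y ∧ γ 1 = z' ∧
      ∀ t ∈ Set.Icc (0:ℝ) 1, γ t ≠ 0 ∧ qf Q (γ t) = 0 := by
  have he0 : bf Q y z' ≠ 0 := by
    intro h; rw [h, zero_mul] at heneg; exact lt_irrefl _ heneg
  have hKpos : 0 < -2 * bf Q y z' / qf Q u := by
    rcases lt_trichotomy (qf Q u) 0 with h | h | h
    · have : 0 < bf Q y z' := by nlinarith
      exact div_pos_of_neg_of_neg (by linarith) h
    · exact absurd h hqu
    · have : bf Q y z' < 0 := by nlinarith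
      exact div_pos (by linarith) h
  have hKq : (-2 * bf Q y z' / qf Q u) * qf Q u = -2 * bf Q y z' :=
    div_mul_cancel₀ _ hqu
  refine ⟨fun t => (1 - t) • y + t • z' +
      Real.sqrt ((-2 * bf Q y z' / qf Q u) * (t * (1 - t))) • u,
    by fun_prop, by norm_num, by norm_num, ?_⟩
  intro t ht
  have hnn : 0 ≤ (-2 * bf Q y z' / qf Q u) * (t * (1 - t)) :=
    mul_nonneg hKpos.le (mul_nonneg ht.1 (by linarith [ht.2]))
  have hsq : Real.sqrt ((-2 * bf Q y z' / qf Q u) * (t * (1 - t))) ^ 2 =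
      (-2 * bf Q y z' / qf Q u) * (t * (1 - t)) := Real.sq_sqrt hnn
  constructor
  · intro h0
    replace h0 : (1 - t) • y + t • z' +
        Real.sqrt ((-2 * bf Q y z' / qf Q u) * (t * (1 - t))) • u = 0 := h0
    have h1 : bf Q y ((1 - t) • y + t • z' +
        Real.sqrt ((-2 * bf Q y z' / qf Q u) * (t * (1 - t))) • u) = 0 := by
      rw [h0]; simp [bf]
    rw [bf_add_right, bf_add_right, bf_smul_right, bf_smul_right, bf_smul_right,
      ← qf_eq_bf, hqy, hyu] at h1
    have ht0 : t = 0 := by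
      rcases mul_eq_zero.mp (by linarith : t * bf Q y z' = 0) with h | h
      · exact h
      · exact absurd h he0
    rw [ht0] at h0
    simp at h0
    exact hy h0
  · replace hqz' : qf Q z' = 0 := hqz'
    rw [show qf Q ((fun t => (1 - t) • y + t • z' +
        Real.sqrt ((-2 * bf Q y z' / qf Q u) * (t * (1 - t))) • u) t) =
        qf Q ((1 - t) • y + t • z' +
        Real.sqrt ((-2 * bf Q y z' / qf Q u) * (t * (1 - t))) • u) from rfl,
      qf_expand3 hQ, hqy, hqz', hsq, hyu, hz'u]
    linear_combination (t * (1 - t)) * hKq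

/-- Key connectivity lemma: the nonzero zero-set of a quadratic form is
"projectively path connected" for `n ≥ 3`. -/
lemma pathA (hn : 3 ≤ n) {Q : Matrix (Fin n) (Fin n) ℝ} (hQ : Q.IsSymm)
    {y z : Fin n → ℝ} (hy : y ≠ 0) (hz : z ≠ 0)
    (hqy : qf Q y = 0) (hqz : qf Q z = 0) :
    ∃ γ : ℝ → (Fin n → ℝ), Continuous γ ∧ γ 0 = y ∧ (γ 1 = z ∨ γ 1 = -z) ∧
      ∀ t ∈ Set.Icc (0:ℝ) 1, γ t ≠ 0 ∧ qf Q (γ t) = 0 := by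
  by_cases hdep : ∃ c : ℝ, z = c • y
  · -- dependent case
    obtain ⟨c, rfl⟩ := hdep
    have hc : c ≠ 0 := by rintro rfl; simp at hz
    refine ⟨fun t => (1 - t + t * |c|) • y, by fun_prop, by simp, ?_, ?_⟩
    · rcases lt_or_ge c 0 with h | h
      · right
        show ((1:ℝ) - 1 + 1 * |c|) • y = -(c • y)
        rw [abs_of_neg h, show (1:ℝ) - 1 + 1 * (-c) = -c by ring, neg_smul]
      · left
        show ((1:ℝ) - 1 + 1 * |c|) • y = c • y
        rw [abs_of_nonneg h, show (1:ℝ) - 1 + 1 * c = c by ring]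
    · intro t ht
      have habs : 0 < |c| := abs_pos.mpr hc
      have hk : 0 < 1 - t + t * |c| := by
        rcases eq_or_lt_of_le ht.2 with h | h
        · rw [h]; simpa using habs
        · nlinarith [mul_nonneg ht.1 habs.le]
      exact ⟨smul_ne_zero hk.ne' hy, by rw [qf_smul]; simp [hqy]⟩
  push_neg at hdep
  by_cases hβ0 : bf Q y z = 0
  · -- independent, b-orthogonal: great circle
    refine ⟨fun t => Real.cos (Real.pi * t / 2) • y + Real.sin (Real.pi * t / 2) • z,
      by fun_prop, by simp, Or.inl ?_, ?_⟩
    · show Real.cos (Real.pi * 1 / 2) • y + Real.sin (Real.pi * 1 / 2) • z = z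
      rw [show Real.pi * 1 / 2 = Real.pi / 2 by ring, Real.cos_pi_div_two,
        Real.sin_pi_div_two]
      simp
    intro t ht
    constructor
    · intro h0
      replace h0 : Real.cos (Real.pi * t / 2) • y + Real.sin (Real.pi * t / 2) • z = 0 := h0
      by_cases hs : Real.sin (Real.pi * t / 2) = 0
      · have hc1 : Real.cos (Real.pi * t / 2) ≠ 0 := by
          intro hc0
          have := Real.sin_sq_add_cos_sq (Real.pi * t / 2)
          rw [hs, hc0] at this; norm_num at this
        apply hy
        have h0' : Real.cos (Real.pi * t / 2) • y = 0 := by rw [hs] at h0; simpa using h0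
        exact (smul_eq_zero.mp h0').resolve_left hc1
      · apply hdep (-(Real.cos (Real.pi * t / 2)) / Real.sin (Real.pi * t / 2))
        funext i
        have hi := congrFun h0 i
        simp only [Pi.add_apply, Pi.smul_apply, smul_eq_mul, Pi.zero_apply] at hi
        simp only [Pi.smul_apply, smul_eq_mul]
        field_simp
        linarith
    · show qf Q (Real.cos (Real.pi * t / 2) • y + Real.sin (Real.pi * t / 2) • z) = 0
      rw [qf_expand2 hQ, hqy, hqz, hβ0]; ring
  -- main cases: independent, β ≠ 0.  Get u b-orthogonal to y and z.
  obtain ⟨u, hu0, hyu, hzu⟩ := exists_orth hn Q y z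
  by_cases hqu : qf Q u = 0
  · -- two great circles through u
    have hynu : ∀ s : ℝ, Real.cos s • y + Real.sin s • u ≠ 0 := by
      intro s h0
      by_cases hs : Real.sin s = 0
      · have hc1 : Real.cos s ≠ 0 := by
          intro hc0; have := Real.sin_sq_add_cos_sq s; rw [hs, hc0] at this; norm_num at this
        exact hy ((smul_eq_zero.mp (by rw [hs] at h0; simpa using h0)).resolve_left hc1)
      · have hu_eq : u = (-(Real.cos s) / Real.sin s) • y := by
          funext i
          have hi := congrFun h0 i
          simp only [Pi.add_apply, Pi.smul_apply, smul_eq_mul, Pi.zero_apply] at hi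
          simp only [Pi.smul_apply, smul_eq_mul]
          field_simp; linarith
        have hcon : bf Q z u = (-(Real.cos s) / Real.sin s) * bf Q z y := by
          rw [hu_eq, bf_smul_right]
        rw [hzu, ← bf_comm hQ] at hcon
        have hk : (-(Real.cos s) / Real.sin s) = 0 := by
          rcases mul_eq_zero.mp hcon.symm with h | h
          · exact h
          · exact absurd h hβ0
        rw [hk, zero_smul] at hu_eq
        exact hu0 hu_eq
    have hznu : ∀ s : ℝ, Real.cos s • u + Real.sin s • z ≠ 0 := by
      intro s h0
      by_cases hc : Real.cos s = 0
      · have hs1 : Real.sin s ≠ 0 := by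
          intro hs0; have := Real.sin_sq_add_cos_sq s; rw [hs0, hc] at this; norm_num at this
        exact hz ((smul_eq_zero.mp (by rw [hc] at h0; simpa using h0)).resolve_left hs1)
      · have hu_eq : u = (-(Real.sin s) / Real.cos s) • z := by
          funext i
          have hi := congrFun h0 i
          simp only [Pi.add_apply, Pi.smul_apply, smul_eq_mul, Pi.zero_apply] at hi
          simp only [Pi.smul_apply, smul_eq_mul]
          field_simp; linarith
        have hcon : bf Q y u = (-(Real.sin s) / Real.cos s) * bf Q y z := by
          rw [hu_eq, bf_smul_right]
        rw [hyu] at hcon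
        have hk : (-(Real.sin s) / Real.cos s) = 0 := by
          rcases mul_eq_zero.mp hcon.symm with h | h
          · exact h
          · exact absurd h hβ0
        rw [hk, zero_smul] at hu_eq
        exact hu0 hu_eq
    refine ⟨fun t => if t ≤ 1/2 then Real.cos (Real.pi * t) • y + Real.sin (Real.pi * t) • u
        else Real.cos (Real.pi * (t - 1/2)) • u + Real.sin (Real.pi * (t - 1/2)) • z,
      ?_, ?_, Or.inl ?_, ?_⟩
    · apply Continuous.if_le (by fun_prop) (by fun_prop) (by fun_prop) (by fun_prop)
      intro t ht
      rw [ht, show Real.pi * ((1:ℝ)/2) = Real.pi / 2 by ring,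
        show ((1:ℝ)/2 - 1/2) = 0 by norm_num, Real.cos_pi_div_two, Real.sin_pi_div_two]
      simp
    · show (if (0:ℝ) ≤ 1/2 then _ else _) = y
      rw [if_pos (by norm_num : (0:ℝ) ≤ 1/2)]
      simp
    · show (if (1:ℝ) ≤ 1/2 then _ else _) = z
      rw [if_neg (by norm_num : ¬ (1:ℝ) ≤ 1/2),
        show Real.pi * ((1:ℝ) - 1/2) = Real.pi / 2 by ring, Real.cos_pi_div_two,
        Real.sin_pi_div_two]
      simp
    · intro t _
      by_cases h : t ≤ 1/2
      · show (if t ≤ 1/2 then _ else _) ≠ 0 ∧ qf Q (if t ≤ 1/2 then _ else _) = 0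
        rw [if_pos h]
        refine ⟨hynu _, ?_⟩
        rw [qf_expand2 hQ, hqy, hqu, hyu]; ring
      · show (if t ≤ 1/2 then _ else _) ≠ 0 ∧ qf Q (if t ≤ 1/2 then _ else _) = 0
        rw [if_neg h]
        refine ⟨hznu _, ?_⟩
        have huz : bf Q u z = 0 := by rw [bf_comm hQ]; exact hzu
        rw [qf_expand2 hQ, hqz, hqu, huz]; ring
  · -- final case: Q(u) ≠ 0, β ≠ 0: explicit algebraic path via pathA_aux
    by_cases hsign : 0 < bf Q y z * qf Q u
    · have hzn : bf Q (-z) u = 0 := by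
        rw [bf_comm hQ, bf_neg_right, bf_comm hQ, hzu, neg_zero]
      have hyzn : bf Q y (-z) * qf Q u < 0 := by
        rw [bf_neg_right]; nlinarith
      obtain ⟨γ, hγc, hγ0, hγ1, hγp⟩ := pathA_aux hQ hy hqy (by rw [qf_neg]; exact hqz)
        hyu hzn hqu hyzn
      exact ⟨γ, hγc, hγ0, Or.inr hγ1, hγp⟩
    · push_neg at hsign
      have hlt : bf Q y z * qf Q u < 0 :=
        lt_of_le_of_ne hsign (mul_ne_zero hβ0 hqu)
      obtain ⟨γ, hγc, hγ0, hγ1, hγp⟩ := pathA_aux hQ hy hqy hqz hyu hzu hqu hlt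
      exact ⟨γ, hγc, hγ0, Or.inl hγ1, hγp⟩

lemma posdef_qf {B : Matrix (Fin n) (Fin n) ℝ} (hB : B.PosDef) {x : Fin n → ℝ}
    (hx : x ≠ 0) : 0 < qf B x := by
  have := hB.dotProduct_mulVec_pos hx; simpa [qf] using this

lemma isSymm_comb (a b c : ℝ) {P G B : Matrix (Fin n) (Fin n) ℝ}
    (hP : P.IsSymm) (hG : G.IsSymm) (hB : B.IsSymm) :
    (a • P + b • G + c • B).IsSymm := by
  unfold Matrix.IsSymm at *
  rw [transpose_add, transpose_add, transpose_smul, transpose_smul, transpose_smul,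
    hP, hG, hB]

/-- Brickman-type theorem: on the ellipsoid `qf B x = 1` (with `B` positive definite,
`n ≥ 3`), the joint image of two quadratic forms is convex. -/
lemma brickman (hn : 3 ≤ n) {B P G : Matrix (Fin n) (Fin n) ℝ}
    (hB : B.PosDef) (hBs : B.IsSymm) (hPs : P.IsSymm) (hGs : G.IsSymm)
    {y z : Fin n → ℝ} (hyB : qf B y = 1) (hzB : qf B z = 1)
    {lam : ℝ} (hlam : lam ∈ Set.Icc (0:ℝ) 1) :
    ∃ x : Fin n → ℝ, qf B x = 1 ∧
      qf P x = lam * qf P y + (1 - lam) * qf P z ∧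
      qf G x = lam * qf G y + (1 - lam) * qf G z := by
  have hy0 : y ≠ 0 := by rintro rfl; rw [qf_zero] at hyB; norm_num at hyB
  have hz0 : z ≠ 0 := by rintro rfl; rw [qf_zero] at hzB; norm_num at hzB
  set d₁ : ℝ := qf P z - qf P y with hd₁
  set d₂ : ℝ := qf G z - qf G y with hd₂
  by_cases hd : d₁ = 0 ∧ d₂ = 0
  · refine ⟨y, hyB, ?_, ?_⟩
    · have : qf P z = qf P y := by have := hd.1; rw [hd₁] at this; linarith
      rw [this]; ring
    · have : qf G z = qf G y := by have := hd.2; rw [hd₂] at this; linarith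
      rw [this]; ring
  have hdd : 0 < d₁ ^ 2 + d₂ ^ 2 := by
    rcases not_and_or.mp hd with h | h
    · positivity
    · positivity
  set r : ℝ := -d₂ * qf P y + d₁ * qf G y with hr
  set Q : Matrix (Fin n) (Fin n) ℝ := (-d₂) • P + d₁ • G + (-r) • B with hQ
  have hQval : ∀ x, qf Q x = -d₂ * qf P x + d₁ * qf G x + -r * qf B x := by
    intro x
    rw [hQ, qf_matrix_add, qf_matrix_add, qf_matrix_smul, qf_matrix_smul, qf_matrix_smul]
  have hQs : Q.IsSymm := isSymm_comb _ _ _ hPs hGs hBs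
  have hQy : qf Q y = 0 := by rw [hQval, hyB, hr]; ring
  have hQz : qf Q z = 0 := by
    rw [hQval, hzB, hr]
    have h1 : qf P z = qf P y + d₁ := by rw [hd₁]; ring
    have h2 : qf G z = qf G y + d₂ := by rw [hd₂]; ring
    rw [h1, h2]; ring
  obtain ⟨γ, hγc, hγ0, hγ1, hγp⟩ := pathA hn hQs hy0 hz0 hQy hQz
  -- values at endpoints
  have hP1 : qf P (γ 1) = qf P z := by rcases hγ1 with h | h <;> rw [h] <;> simp [qf_neg]
  have hG1 : qf G (γ 1) = qf G z := by rcases hγ1 with h | h <;> rw [h] <;> simp [qf_neg]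
  have hB1 : qf B (γ 1) = 1 := by
    rcases hγ1 with h | h <;> rw [h]
    · exact hzB
    · rw [qf_neg]; exact hzB
  have hNpos : ∀ t ∈ Set.Icc (0:ℝ) 1, 0 < qf B (γ t) := fun t ht =>
    posdef_qf hB (hγp t ht).1
  set s : ℝ → ℝ := fun t =>
    ((qf P (γ t) / qf B (γ t) - qf P y) * d₁ +
     (qf G (γ t) / qf B (γ t) - qf G y) * d₂) / (d₁ ^ 2 + d₂ ^ 2) with hs
  have hPc : ContinuousOn (fun t => qf P (γ t)) (Set.Icc (0:ℝ) 1) :=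
    (Continuous.comp (qf_continuous P) hγc).continuousOn
  have hGc : ContinuousOn (fun t => qf G (γ t)) (Set.Icc (0:ℝ) 1) :=
    (Continuous.comp (qf_continuous G) hγc).continuousOn
  have hBc : ContinuousOn (fun t => qf B (γ t)) (Set.Icc (0:ℝ) 1) :=
    (Continuous.comp (qf_continuous B) hγc).continuousOn
  have hne : ∀ t ∈ Set.Icc (0:ℝ) 1, qf B (γ t) ≠ 0 := fun t ht => (hNpos t ht).ne'
  have hscont : ContinuousOn s (Set.Icc 0 1) := by
    rw [hs]
    exact ContinuousOn.div_const (ContinuousOn.add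
      (ContinuousOn.mul (ContinuousOn.sub (ContinuousOn.div hPc hBc hne)
        continuousOn_const) continuousOn_const)
      (ContinuousOn.mul (ContinuousOn.sub (ContinuousOn.div hGc hBc hne)
        continuousOn_const) continuousOn_const)) _
  have hs0 : s 0 = 0 := by
    rw [hs]
    simp only [hγ0, hyB]
    simp
  have hs1 : s 1 = 1 := by
    rw [hs]
    simp only [hP1, hG1, hB1]
    rw [hd₁, hd₂]
    simp only [div_one]
    rw [div_eq_one_iff_eq (by rw [hd₁, hd₂] at hdd; exact hdd.ne')]
    ring
  -- the plane identity
  have hplane : ∀ t ∈ Set.Icc (0:ℝ) 1,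
      -d₂ * (qf P (γ t) / qf B (γ t)) + d₁ * (qf G (γ t) / qf B (γ t)) = r := by
    intro t ht
    have h0 := (hγp t ht).2
    rw [hQval] at h0
    have hN := (hNpos t ht).ne'
    have hkey : -d₂ * qf P (γ t) + d₁ * qf G (γ t) = r * qf B (γ t) := by
      linear_combination h0
    calc -d₂ * (qf P (γ t) / qf B (γ t)) + d₁ * (qf G (γ t) / qf B (γ t))
        = (-d₂ * qf P (γ t) + d₁ * qf G (γ t)) / qf B (γ t) := by ring
      _ = (r * qf B (γ t)) / qf B (γ t) := by rw [hkey]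
      _ = r := mul_div_cancel_right₀ _ hN
  -- coordinates along the path are affine in s
  have hcoord : ∀ t ∈ Set.Icc (0:ℝ) 1,
      qf P (γ t) / qf B (γ t) = qf P y + s t * d₁ ∧
      qf G (γ t) / qf B (γ t) = qf G y + s t * d₂ := by
    intro t ht
    have hp := hplane t ht
    set a : ℝ := qf P (γ t) / qf B (γ t) - qf P y with ha
    set b : ℝ := qf G (γ t) / qf B (γ t) - qf G y with hb
    have hab : -d₂ * a + d₁ * b = 0 := by
      rw [ha, hb, hr] at *
      linear_combination hp
    have hst : s t = (a * d₁ + b * d₂) / (d₁ ^ 2 + d₂ ^ 2) := by rw [hs]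
    constructor
    · have h2 : a = s t * d₁ := by
        rw [hst, div_mul_eq_mul_div, eq_div_iff hdd.ne']
        linear_combination (-d₂) * hab
      rw [ha] at h2; linarith
    · have h2 : b = s t * d₂ := by
        rw [hst, div_mul_eq_mul_div, eq_div_iff hdd.ne']
        linear_combination d₁ * hab
      rw [hb] at h2; linarith
  -- intermediate value theorem
  have hmem : (1 - lam) ∈ Set.Icc (s 0) (s 1) := by
    rw [hs0, hs1]; exact ⟨by linarith [hlam.2], by linarith [hlam.1]⟩
  obtain ⟨t', ht', hst'⟩ := intermediate_value_Icc (by norm_num : (0:ℝ) ≤ 1) hscont hmem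
  have hN' := hNpos t' ht'
  refine ⟨(Real.sqrt (qf B (γ t')))⁻¹ • γ t', ?_, ?_, ?_⟩
  · rw [qf_smul, inv_pow, Real.sq_sqrt hN'.le, inv_mul_cancel₀ hN'.ne']
  · rw [qf_smul, inv_pow, Real.sq_sqrt hN'.le]
    have := (hcoord t' ht').1
    rw [hst'] at this
    rw [show (qf B (γ t'))⁻¹ * qf P (γ t') = qf P (γ t') / qf B (γ t') by ring, this, hd₁]
    ring
  · rw [qf_smul, inv_pow, Real.sq_sqrt hN'.le]
    have := (hcoord t' ht').2
    rw [hst'] at this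
    rw [show (qf B (γ t'))⁻¹ * qf G (γ t') = qf G (γ t') / qf B (γ t') by ring, this, hd₂]
    ring

lemma isSymm_comb2 (a b : ℝ) {P G : Matrix (Fin n) (Fin n) ℝ}
    (hP : P.IsSymm) (hG : G.IsSymm) : (a • P + b • G).IsSymm := by
  unfold Matrix.IsSymm at *
  rw [transpose_add, transpose_smul, transpose_smul, hP, hG]

/-- Polyak's convexity theorem: the joint range of three quadratic forms is convex
when `n ≥ 3` and some combination of two of them is positive definite. -/
lemma range_convex (hn : 3 ≤ n) {A₀ A₁ A₂ : Matrix (Fin n) (Fin n) ℝ}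
    (hA₀ : A₀.IsSymm) (hA₁ : A₁.IsSymm) (hA₂ : A₂.IsSymm)
    {μ₁ μ₂ : ℝ} (hB : (μ₁ • A₁ + μ₂ • A₂).PosDef) :
    Convex ℝ (Set.range (fun x : Fin n → ℝ => ![qf A₀ x, qf A₁ x, qf A₂ x])) := by
  have hn0 : (0:Fin n → ℝ) ≠ Pi.single ⟨0, by omega⟩ 1 := by
    intro h
    have := congrFun h ⟨0, by omega⟩
    simp at this
  set B := μ₁ • A₁ + μ₂ • A₂ with hBdef
  have hBs : B.IsSymm := isSymm_comb2 _ _ hA₁ hA₂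
  have hBval : ∀ x, qf B x = μ₁ * qf A₁ x + μ₂ * qf A₂ x := by
    intro x; rw [hBdef, qf_matrix_add, qf_matrix_smul, qf_matrix_smul]
  have hμ : 0 < μ₁ ^ 2 + μ₂ ^ 2 := by
    rcases eq_or_ne μ₁ 0 with h1 | h1
    · rcases eq_or_ne μ₂ 0 with h2 | h2
      · exfalso
        have hpos := posdef_qf hB (Ne.symm hn0)
        rw [hBval, h1, h2] at hpos
        simp at hpos
      · positivity
    · positivity
  -- the companion form
  set G := (-μ₂) • A₁ + μ₁ • A₂ with hGdef
  have hGs : G.IsSymm := isSymm_comb2 _ _ hA₁ hA₂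
  have hGval : ∀ x, qf G x = -μ₂ * qf A₁ x + μ₁ * qf A₂ x := by
    intro x; rw [hGdef, qf_matrix_add, qf_matrix_smul, qf_matrix_smul]
  rintro p ⟨y, rfl⟩ q ⟨z, rfl⟩ a b ha hb hab
  simp only [Set.mem_range]
  -- degenerate cases first
  by_cases hy0 : y = 0
  · refine ⟨Real.sqrt b • z, ?_⟩
    funext i
    fin_cases i <;>
      simp [hy0, qf_smul, qf_zero, Real.sq_sqrt hb]
  by_cases hz0 : z = 0
  · refine ⟨Real.sqrt a • y, ?_⟩
    funext i
    fin_cases i <;>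
      simp [hz0, qf_smul, qf_zero, Real.sq_sqrt ha]
  have hρ : 0 < qf B y := posdef_qf hB hy0
  have hρ' : 0 < qf B z := posdef_qf hB hz0
  set ρ := qf B y with hρdef
  set ρ' := qf B z with hρ'def
  have hσ : 0 < a * ρ + b * ρ' := by
    rcases eq_or_lt_of_le ha with h | h
    · rw [← h] at hab ⊢
      simp at hab ⊢
      rw [hab]; simpa using hρ'
    · have : 0 ≤ b * ρ' := mul_nonneg hb hρ'.le
      nlinarith
  set σ := a * ρ + b * ρ' with hσdef
  set lam := a * ρ / σ with hlamdef
  have hlam : lam ∈ Set.Icc (0:ℝ) 1 := by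
    constructor
    · exact div_nonneg (mul_nonneg ha hρ.le) hσ.le
    · rw [hlamdef, div_le_one hσ]
      nlinarith [mul_nonneg hb hρ'.le]
  -- normalized vectors
  set y' := (Real.sqrt ρ)⁻¹ • y with hy'def
  set z' := (Real.sqrt ρ')⁻¹ • z with hz'def
  have hqy' : ∀ M : Matrix (Fin n) (Fin n) ℝ, qf M y' = ρ⁻¹ * qf M y := by
    intro M; rw [hy'def, qf_smul, inv_pow, Real.sq_sqrt hρ.le]
  have hqz' : ∀ M : Matrix (Fin n) (Fin n) ℝ, qf M z' = ρ'⁻¹ * qf M z := by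
    intro M; rw [hz'def, qf_smul, inv_pow, Real.sq_sqrt hρ'.le]
  have hy'B : qf B y' = 1 := by rw [hqy' B, ← hρdef, inv_mul_cancel₀ hρ.ne']
  have hz'B : qf B z' = 1 := by rw [hqz' B, ← hρ'def, inv_mul_cancel₀ hρ'.ne']
  obtain ⟨x, hxB, hxP, hxG⟩ := brickman hn hB hBs hA₀ hGs hy'B hz'B hlam
  -- recover the individual coordinates
  have hE1 : μ₁ * (qf A₁ x - (lam * qf A₁ y' + (1 - lam) * qf A₁ z')) +
      μ₂ * (qf A₂ x - (lam * qf A₂ y' + (1 - lam) * qf A₂ z')) = 0 := by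
    have h1 : qf B x = lam * qf B y' + (1 - lam) * qf B z' := by
      rw [hxB, hy'B, hz'B]; ring
    rw [hBval, hBval, hBval] at h1
    linear_combination h1
  have hE2 : -μ₂ * (qf A₁ x - (lam * qf A₁ y' + (1 - lam) * qf A₁ z')) +
      μ₁ * (qf A₂ x - (lam * qf A₂ y' + (1 - lam) * qf A₂ z')) = 0 := by
    have h2 := hxG
    rw [hGval, hGval, hGval] at h2
    linear_combination h2
  have he1 : qf A₁ x = lam * qf A₁ y' + (1 - lam) * qf A₁ z' := by
    have h3 : (μ₁ ^ 2 + μ₂ ^ 2) * (qf A₁ x - (lam * qf A₁ y' + (1 - lam) * qf A₁ z')) = 0 := by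
      linear_combination μ₁ * hE1 - μ₂ * hE2
    rcases mul_eq_zero.mp h3 with h | h
    · exact absurd h hμ.ne'
    · linarith
  have he2 : qf A₂ x = lam * qf A₂ y' + (1 - lam) * qf A₂ z' := by
    have h3 : (μ₁ ^ 2 + μ₂ ^ 2) * (qf A₂ x - (lam * qf A₂ y' + (1 - lam) * qf A₂ z')) = 0 := by
      linear_combination μ₂ * hE1 + μ₁ * hE2
    rcases mul_eq_zero.mp h3 with h | h
    · exact absurd h hμ.ne'
    · linarith
  -- scaling identities
  have hsiglam : σ * lam = a * ρ := by
    rw [hlamdef, mul_div_cancel₀ _ hσ.ne']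
  have hsiglam1 : σ * (1 - lam) = b * ρ' := by
    rw [hlamdef]
    field_simp
    rw [hσdef]; ring
  have key : ∀ M : Matrix (Fin n) (Fin n) ℝ,
      qf M x = lam * qf M y' + (1 - lam) * qf M z' →
      qf M (Real.sqrt σ • x) = a * qf M y + b * qf M z := by
    intro M hM
    rw [qf_smul, Real.sq_sqrt hσ.le, hM, hqy', hqz']
    have e1 : σ * (lam * (ρ⁻¹ * qf M y)) = a * qf M y := by
      rw [show σ * (lam * (ρ⁻¹ * qf M y)) = (σ * lam) * ρ⁻¹ * qf M y by ring, hsiglam]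
      rw [show a * ρ * ρ⁻¹ * qf M y = a * (ρ * ρ⁻¹) * qf M y by ring,
        mul_inv_cancel₀ hρ.ne']
      ring
    have e2 : σ * ((1 - lam) * (ρ'⁻¹ * qf M z)) = b * qf M z := by
      rw [show σ * ((1 - lam) * (ρ'⁻¹ * qf M z)) = (σ * (1 - lam)) * ρ'⁻¹ * qf M z by ring,
        hsiglam1]
      rw [show b * ρ' * ρ'⁻¹ * qf M z = b * (ρ' * ρ'⁻¹) * qf M z by ring,
        mul_inv_cancel₀ hρ'.ne']
      ring
    linarith [e1, e2]
  refine ⟨Real.sqrt σ • x, ?_⟩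
  funext i
  fin_cases i
  · simpa using key A₀ hxP
  · simpa using key A₁ he1
  · simpa using key A₂ he2

end PolyakAux

open PolyakAux in
/-- Polyak's S-procedure with two quadratic constraints. -/
theorem polyak_s_procedure (n : ℕ) (hn : 3 ≤ n)
    (A₀ A₁ A₂ : Matrix (Fin n) (Fin n) ℝ)
    (hA₀ : A₀.IsSymm) (hA₁ : A₁.IsSymm) (hA₂ : A₂.IsSymm)
    (α₀ α₁ α₂ : ℝ)
    (hdef : ∃ μ₁ μ₂ : ℝ, (μ₁ • A₁ + μ₂ • A₂).PosDef)
    (hSlater : ∃ x0 : Fin n → ℝ, x0 ⬝ᵥ A₁ *ᵥ x0 < α₁ ∧ x0 ⬝ᵥ A₂ *ᵥ x0 < α₂) :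
    (¬ ∃ x : Fin n → ℝ, x ⬝ᵥ A₀ *ᵥ x < α₀ ∧ x ⬝ᵥ A₁ *ᵥ x ≤ α₁ ∧ x ⬝ᵥ A₂ *ᵥ x ≤ α₂) ↔
      (∃ τ₁ τ₂ : ℝ, 0 ≤ τ₁ ∧ 0 ≤ τ₂ ∧ (A₀ + τ₁ • A₁ + τ₂ • A₂).PosSemidef ∧
        α₀ + τ₁ * α₁ + τ₂ * α₂ ≤ 0) := by
  constructor
  · intro hNoSol
    obtain ⟨μ₁, μ₂, hB⟩ := hdef
    obtain ⟨x0, hx1, hx2⟩ := hSlater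
    replace hx1 : qf A₁ x0 < α₁ := hx1
    replace hx2 : qf A₂ x0 < α₂ := hx2
    set T := Set.range (fun x : Fin n → ℝ => ![qf A₀ x, qf A₁ x, qf A₂ x]) with hT
    have hTconv : Convex ℝ T := range_convex hn hA₀ hA₁ hA₂ hB
    set S : Set (Fin 3 → ℝ) :=
      {u : Fin 3 → ℝ | u 0 < α₀} ∩ ({u | u 1 < α₁} ∩ {u | u 2 < α₂}) with hS
    have hSopen : IsOpen S :=
      (isOpen_lt (continuous_apply 0) continuous_const).inter
        ((isOpen_lt (continuous_apply 1) continuous_const).inter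
          (isOpen_lt (continuous_apply 2) continuous_const))
    have hSconv : Convex ℝ S :=
      (convex_halfSpace_lt ⟨fun _ _ => rfl, fun _ _ => rfl⟩ α₀).inter
        ((convex_halfSpace_lt ⟨fun _ _ => rfl, fun _ _ => rfl⟩ α₁).inter
          (convex_halfSpace_lt ⟨fun _ _ => rfl, fun _ _ => rfl⟩ α₂))
    have hdisj : Disjoint S T := by
      rw [Set.disjoint_left]
      rintro u hu ⟨x, hx⟩
      apply hNoSol
      refine ⟨x, ?_, ?_, ?_⟩
      · have h := hu.1; rw [← hx] at h; exact h
      · have h := hu.2.1; rw [← hx] at h; exact le_of_lt h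
      · have h := hu.2.2; rw [← hx] at h; exact le_of_lt h
    obtain ⟨f, w, hfs, hfT⟩ := geometric_hahn_banach_open hSconv hSopen hTconv hdisj
    set c₀ := f (Pi.single 0 1) with hc₀def
    set c₁ := f (Pi.single 1 1) with hc₁def
    set c₂ := f (Pi.single 2 1) with hc₂def
    have hrep : ∀ a : Fin 3 → ℝ, f a = a 0 * c₀ + a 1 * c₁ + a 2 * c₂ := by
      intro a
      have h : a = a 0 • (Pi.single 0 1 : Fin 3 → ℝ) + a 1 • (Pi.single 1 1 : Fin 3 → ℝ)
          + a 2 • (Pi.single 2 1 : Fin 3 → ℝ) := by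
        funext j; fin_cases j <;> simp [Pi.single_apply]
      conv_lhs => rw [h]
      rw [map_add, map_add, _root_.map_smul, _root_.map_smul, _root_.map_smul]
      simp [smul_eq_mul, hc₀def, hc₁def, hc₂def]
    -- membership helper for explicit triples
    have hmemS : ∀ p q r : ℝ, p < α₀ → q < α₁ → r < α₂ → (![p, q, r] : Fin 3 → ℝ) ∈ S := by
      intro p q r h1 h2 h3
      exact ⟨h1, h2, h3⟩
    have hfS : ∀ p q r : ℝ, p < α₀ → q < α₁ → r < α₂ →
        p * c₀ + q * c₁ + r * c₂ < w := by
      intro p q r h1 h2 h3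
      have := hfs _ (hmemS p q r h1 h2 h3)
      rw [hrep] at this
      simpa using this
    have hWsub : ∀ x : Fin n → ℝ, w ≤ qf A₀ x * c₀ + qf A₁ x * c₁ + qf A₂ x * c₂ := by
      intro x
      have := hfT _ ⟨x, rfl⟩
      rw [hrep] at this
      simpa using this
    clear_value c₀ c₁ c₂
    have hw0 : w ≤ 0 := by
      have := hWsub 0
      simpa [qf_zero] using this
    -- nonnegativity of the coefficients
    have hc0 : 0 ≤ c₀ := by
      by_contra hc; push_neg at hc
      set X := α₀ * c₀ + α₁ * c₁ + α₂ * c₂ with hX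
      set M := max 1 ((w + 1 + c₁ + c₂ - X) / (-c₀)) with hM
      have hM1 : (1:ℝ) ≤ M := le_max_left _ _
      have hMc : w + 1 + c₁ + c₂ - X ≤ M * (-c₀) :=
        (div_le_iff₀ (by linarith : (0:ℝ) < -c₀)).mp (le_max_right _ _)
      have h := hfS (α₀ - M) (α₁ - 1) (α₂ - 1) (by linarith) (by linarith) (by linarith)
      rw [hX] at hMc
      nlinarith
    have hc1 : 0 ≤ c₁ := by
      by_contra hc; push_neg at hc
      set X := α₀ * c₀ + α₁ * c₁ + α₂ * c₂ with hX
      set M := max 1 ((w + 1 + c₀ + c₂ - X) / (-c₁)) with hM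
      have hM1 : (1:ℝ) ≤ M := le_max_left _ _
      have hMc : w + 1 + c₀ + c₂ - X ≤ M * (-c₁) :=
        (div_le_iff₀ (by linarith : (0:ℝ) < -c₁)).mp (le_max_right _ _)
      have h := hfS (α₀ - 1) (α₁ - M) (α₂ - 1) (by linarith) (by linarith) (by linarith)
      rw [hX] at hMc
      nlinarith
    have hc2 : 0 ≤ c₂ := by
      by_contra hc; push_neg at hc
      set X := α₀ * c₀ + α₁ * c₁ + α₂ * c₂ with hX
      set M := max 1 ((w + 1 + c₀ + c₁ - X) / (-c₂)) with hM
      have hM1 : (1:ℝ) ≤ M := le_max_left _ _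
      have hMc : w + 1 + c₀ + c₁ - X ≤ M * (-c₂) :=
        (div_le_iff₀ (by linarith : (0:ℝ) < -c₂)).mp (le_max_right _ _)
      have h := hfS (α₀ - 1) (α₁ - 1) (α₂ - M) (by linarith) (by linarith) (by linarith)
      rw [hX] at hMc
      nlinarith
    -- supremum over S
    have hsα : α₀ * c₀ + α₁ * c₁ + α₂ * c₂ ≤ w := by
      by_contra hgt; push_neg at hgt
      set X := α₀ * c₀ + α₁ * c₁ + α₂ * c₂ with hX
      set C := c₀ + c₁ + c₂ with hC
      have hCnn : 0 ≤ C := by rw [hC]; linarith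
      set ε := (X - w) / (2 * (C + 1)) with hε
      have hεpos : 0 < ε := div_pos (by linarith) (by linarith)
      have h2 : ε * (C + 1) = (X - w) / 2 := by
        rw [hε]; field_simp
      have h := hfS (α₀ - ε) (α₁ - ε) (α₂ - ε) (by linarith) (by linarith) (by linarith)
      have hexp : ε * C = ε * c₀ + ε * c₁ + ε * c₂ := by rw [hC]; ring
      have hεC : ε * C ≤ ε * (C + 1) :=
        mul_le_mul_of_nonneg_left (by linarith) hεpos.le
      rw [hX] at *
      nlinarith
    -- positivity of c₀ via the Slater point
    have hc0pos : 0 < c₀ := by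
      rcases lt_or_eq_of_le hc0 with h | h
      · exact h
      · exfalso
        by_cases hz : c₁ = 0 ∧ c₂ = 0
        · have h1 := hfS (α₀ - 1) (α₁ - 1) (α₂ - 1) (by linarith) (by linarith) (by linarith)
          rw [← h, hz.1, hz.2] at h1
          simp at h1
          linarith
        · have hx := hWsub x0
          rw [← h] at hx hsα
          rcases not_and_or.mp hz with h2 | h2
          · have hcpos : 0 < c₁ := lt_of_le_of_ne hc1 (Ne.symm h2)
            have s1 : qf A₁ x0 * c₁ < α₁ * c₁ := mul_lt_mul_of_pos_right hx1 hcpos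
            have s2 : qf A₂ x0 * c₂ ≤ α₂ * c₂ := mul_le_mul_of_nonneg_right hx2.le hc2
            nlinarith
          · have hcpos : 0 < c₂ := lt_of_le_of_ne hc2 (Ne.symm h2)
            have s1 : qf A₁ x0 * c₁ ≤ α₁ * c₁ := mul_le_mul_of_nonneg_right hx1.le hc1
            have s2 : qf A₂ x0 * c₂ < α₂ * c₂ := mul_lt_mul_of_pos_right hx2 hcpos
            nlinarith
    -- the quadratic form c₀ f₀ + c₁ f₁ + c₂ f₂ is nonnegative
    have hnn : ∀ x : Fin n → ℝ, 0 ≤ qf A₀ x * c₀ + qf A₁ x * c₁ + qf A₂ x * c₂ := by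
      intro x
      by_contra hneg; push_neg at hneg
      set v := qf A₀ x * c₀ + qf A₁ x * c₁ + qf A₂ x * c₂ with hv
      have hvne : v < 0 := hneg
      have hqpos : 0 < (w - 1) / v := div_pos_of_neg_of_neg (by linarith) hvne
      set k := Real.sqrt ((w - 1) / v) with hk
      have hk2 : k ^ 2 = (w - 1) / v := Real.sq_sqrt hqpos.le
      have hsub := hWsub (k • x)
      rw [qf_smul, qf_smul, qf_smul] at hsub
      have heq : k ^ 2 * qf A₀ x * c₀ + k ^ 2 * qf A₁ x * c₁ + k ^ 2 * qf A₂ x * c₂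
          = k ^ 2 * v := by rw [hv]; ring
      have hfin : k ^ 2 * v = w - 1 := by
        rw [hk2, div_mul_cancel₀ _ hvne.ne]
      nlinarith
    refine ⟨c₁ / c₀, c₂ / c₀, div_nonneg hc1 hc0pos.le, div_nonneg hc2 hc0pos.le, ?_, ?_⟩
    · refine Matrix.PosSemidef.of_dotProduct_mulVec_nonneg ?_ ?_
      · have hsymm : (A₀ + (c₁ / c₀) • A₁ + (c₂ / c₀) • A₂).IsSymm := by
          unfold Matrix.IsSymm at *
          rw [transpose_add, transpose_add, transpose_smul, transpose_smul, hA₀, hA₁, hA₂]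
        rw [Matrix.IsHermitian, conjTranspose_eq_transpose_of_trivial]
        exact hsymm
      · intro x
        have hval : qf (A₀ + (c₁ / c₀) • A₁ + (c₂ / c₀) • A₂) x
            = qf A₀ x + (c₁ / c₀) * qf A₁ x + (c₂ / c₀) * qf A₂ x := by
          rw [qf_matrix_add, qf_matrix_add, qf_matrix_smul, qf_matrix_smul]
        have hdiv : qf A₀ x + (c₁ / c₀) * qf A₁ x + (c₂ / c₀) * qf A₂ x
            = (qf A₀ x * c₀ + qf A₁ x * c₁ + qf A₂ x * c₂) / c₀ := by
          field_simp
        have h9 : (0:ℝ) ≤ qf (A₀ + (c₁ / c₀) • A₁ + (c₂ / c₀) • A₂) x := by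
          rw [hval, hdiv]
          exact div_nonneg (hnn x) hc0pos.le
        simpa [qf] using h9
    · have hdiv : α₀ + (c₁ / c₀) * α₁ + (c₂ / c₀) * α₂
          = (α₀ * c₀ + α₁ * c₁ + α₂ * c₂) / c₀ := by
        field_simp
      rw [hdiv]
      apply div_nonpos_of_nonpos_of_nonneg (by linarith) hc0pos.le
  · rintro ⟨τ₁, τ₂, ht1, ht2, hpsd, hα⟩ ⟨x, h0, h1, h2⟩
    have hval : qf (A₀ + τ₁ • A₁ + τ₂ • A₂) x
        = qf A₀ x + τ₁ * qf A₁ x + τ₂ * qf A₂ x := by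
      rw [qf_matrix_add, qf_matrix_add, qf_matrix_smul, qf_matrix_smul]
    have hx' : (0:ℝ) ≤ qf (A₀ + τ₁ • A₁ + τ₂ • A₂) x := by
      have := hpsd.dotProduct_mulVec_nonneg x; simpa [qf] using this
    rw [hval] at hx'
    have h0' : qf A₀ x < α₀ := h0
    have h1' : qf A₁ x ≤ α₁ := h1
    have h2' : qf A₂ x ≤ α₂ := h2
    have b1 : τ₁ * qf A₁ x ≤ τ₁ * α₁ := mul_le_mul_of_nonneg_left h1' ht1
    have b2 : τ₂ * qf A₂ x ≤ τ₂ * α₂ := mul_le_mul_of_nonneg_left h2' ht2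
    linarith
end

section
/- Suppose α < β are real numbers, B = 0, b ≠ 0, and V ∈ ℝ^{n×(n−1)} is a matrix whose columns form a basis of the null space {x ∈ ℝⁿ : bᵀx = 0}. Then the system f(x) < 0, α ≤ h(x) ≤ β has no solution x ∈ ℝⁿ if and only if there exists a real number ν ≥ 0 such that the (n+1)×(n+1) symmetric matrix with block form [[VᵀAV, (1/(2bᵀb))VᵀAb, Vᵀa], [(1/(2bᵀb))bᵀAV, bᵀAb/(2bᵀb)² + ν, aᵀb/(2bᵀb) − (ν/2)(α + β − 2d)], [aᵀV, aᵀb/(2bᵀb) − (ν/2)(α + β − 2d), c + ν(α − d)(β − d)]] is positive semidefinite. -/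
open Matrix

/-- The `(n+1) × (n+1)` certificate matrix
`[[VᵀAV, (1/(2bᵀb))VᵀAb, Vᵀa],
  [(1/(2bᵀb))bᵀAV, bᵀAb/(2bᵀb)² + ν, aᵀb/(2bᵀb) − (ν/2)(α+β−2d)],
  [aᵀV, aᵀb/(2bᵀb) − (ν/2)(α+β−2d), c + ν(α−d)(β−d)]]`,
indexed by `Fin (n-1) ⊕ (Fin 1 ⊕ Fin 1)`. -/
noncomputable def certMatrix {n : ℕ} (A : Matrix (Fin n) (Fin n) ℝ)
    (a b : Fin n → ℝ) (c d α β ν : ℝ) (V : Matrix (Fin n) (Fin (n - 1)) ℝ) :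
    Matrix (Fin (n - 1) ⊕ (Fin 1 ⊕ Fin 1)) (Fin (n - 1) ⊕ (Fin 1 ⊕ Fin 1)) ℝ :=
  Matrix.fromBlocks
    (Vᵀ * A * V)
    (Matrix.of fun i (j : Fin 1 ⊕ Fin 1) =>
      Sum.elim (fun _ => ((1 / (2 * (b ⬝ᵥ b))) • (Vᵀ *ᵥ (A *ᵥ b))) i)
        (fun _ => (Vᵀ *ᵥ a) i) j)
    (Matrix.of fun (i : Fin 1 ⊕ Fin 1) j =>
      Sum.elim (fun _ => ((1 / (2 * (b ⬝ᵥ b))) • (Vᵀ *ᵥ (A *ᵥ b))) j)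
        (fun _ => (Vᵀ *ᵥ a) j) i)
    (Matrix.fromBlocks
      (Matrix.of fun (_ _ : Fin 1) => b ⬝ᵥ (A *ᵥ b) / (2 * (b ⬝ᵥ b)) ^ 2 + ν)
      (Matrix.of fun (_ _ : Fin 1) => a ⬝ᵥ b / (2 * (b ⬝ᵥ b)) - ν / 2 * (α + β - 2 * d))
      (Matrix.of fun (_ _ : Fin 1) => a ⬝ᵥ b / (2 * (b ⬝ᵥ b)) - ν / 2 * (α + β - 2 * d))
      (Matrix.of fun (_ _ : Fin 1) => c + ν * (α - d) * (β - d)))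

/-! ### Auxiliary machinery -/

/-- The quadratic form of a matrix. -/
noncomputable def Qf {ι : Type*} [Fintype ι] (M : Matrix ι ι ℝ) (z : ι → ℝ) : ℝ := z ⬝ᵥ M *ᵥ z

lemma Qf_smul {ι : Type*} [Fintype ι] (M : Matrix ι ι ℝ) (r : ℝ) (z : ι → ℝ) :
    Qf M (r • z) = r ^ 2 * Qf M z := by
  simp only [Qf, Matrix.mulVec_smul, dotProduct_smul, smul_dotProduct,
    smul_eq_mul]
  ring

lemma Qf_expand {ι : Type*} [Fintype ι] (M : Matrix ι ι ℝ) (p q : ℝ) (z w : ι → ℝ) :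
    Qf M (p • z + q • w) = p ^ 2 * Qf M z
      + p * q * (z ⬝ᵥ M *ᵥ w + w ⬝ᵥ M *ᵥ z) + q ^ 2 * Qf M w := by
  simp only [Qf, Matrix.mulVec_add, Matrix.mulVec_smul, dotProduct_add,
    add_dotProduct, dotProduct_smul, smul_dotProduct, smul_eq_mul]
  ring

lemma quad_coeff_nonneg {a b c : ℝ} (h : ∀ s : ℝ, 0 ≤ a * s ^ 2 + b * s + c) : 0 ≤ a := by
  by_contra ha
  push_neg at ha
  set s : ℝ := max 1 ((|b| + |c| + 1) / (-a)) with hs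
  have hs1 : 1 ≤ s := le_max_left _ _
  have hs2 : (|b| + |c| + 1) / (-a) ≤ s := le_max_right _ _
  have hna : 0 < -a := by linarith
  have h1 : |b| + |c| + 1 ≤ (-a) * s := by
    rw [div_le_iff₀ hna] at hs2; linarith [hs2]
  have hb : b * s ≤ |b| * s := by
    have := le_abs_self b; nlinarith
  have hc : c ≤ |c| := le_abs_self c
  have h2 : a * s ^ 2 + b * s + c ≤ a * s ^ 2 + |b| * s + |c| := by linarith
  have h3 : a * s ^ 2 + |b| * s + |c| < 0 := by nlinarith [abs_nonneg b, abs_nonneg c]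
  linarith [h s]

/-- the key "two point" inequality behind the S-lemma. -/
lemma pairwise_ineq {ι : Type*} [Fintype ι] (M N : Matrix ι ι ℝ)
    (h : ∀ z, Qf N z ≤ 0 → 0 ≤ Qf M z) {z₁ z₂ : ι → ℝ}
    (h₁ : 0 < Qf N z₁) (h₂ : Qf N z₂ < 0) :
    0 ≤ Qf M z₁ * (-Qf N z₂) + Qf M z₂ * Qf N z₁ := by
  set w₁ : ι → ℝ := (Real.sqrt (Qf N z₁))⁻¹ • z₁ with hw₁
  set w₂ : ι → ℝ := (Real.sqrt (-Qf N z₂))⁻¹ • z₂ with hw₂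
  have hs₁ : Real.sqrt (Qf N z₁) > 0 := Real.sqrt_pos.2 h₁
  have hs₂ : Real.sqrt (-Qf N z₂) > 0 := Real.sqrt_pos.2 (by linarith)
  have hsq₁ : (Real.sqrt (Qf N z₁)) ^ 2 = Qf N z₁ := Real.sq_sqrt h₁.le
  have hsq₂ : (Real.sqrt (-Qf N z₂)) ^ 2 = -Qf N z₂ := Real.sq_sqrt (by linarith)
  have hNw₁ : Qf N w₁ = 1 := by
    rw [hw₁, Qf_smul, inv_pow, hsq₁, inv_mul_cancel₀ h₁.ne']
  have hNw₂ : Qf N w₂ = -1 := by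
    rw [hw₂, Qf_smul, inv_pow, hsq₂, ← div_eq_inv_mul, div_neg, div_self h₂.ne]
  set β : ℝ := (w₁ ⬝ᵥ N *ᵥ w₂ + w₂ ⬝ᵥ N *ᵥ w₁) / 2 with hβ
  set ρ : ℝ := Real.sqrt (1 + β ^ 2) with hρ
  have hρpos : 0 < ρ := Real.sqrt_pos.2 (by positivity)
  have hρsq : ρ ^ 2 = 1 + β ^ 2 := Real.sq_sqrt (by positivity)
  have hρβ : |β| < ρ := by
    have : |β| = Real.sqrt (β ^ 2) := (Real.sqrt_sq_eq_abs β).symm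
    rw [this, hρ]
    exact Real.sqrt_lt_sqrt (by positivity) (by linarith)
  obtain ⟨hβ1, hβ2⟩ := abs_lt.1 hρβ
  have hCa : 0 ≤ (ρ - β) / (2 * ρ) := div_nonneg (by linarith) (by linarith)
  have hSa : 0 ≤ (ρ + β) / (2 * ρ) := div_nonneg (by linarith) (by linarith)
  set C : ℝ := Real.sqrt ((ρ - β) / (2 * ρ)) with hC
  set S : ℝ := Real.sqrt ((ρ + β) / (2 * ρ)) with hS
  have hC2 : C ^ 2 = (ρ - β) / (2 * ρ) := Real.sq_sqrt hCa
  have hS2 : S ^ 2 = (ρ + β) / (2 * ρ) := Real.sq_sqrt hSa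
  have hCS : C * S = 1 / (2 * ρ) := by
    rw [hC, hS, ← Real.sqrt_mul hCa]
    have : (ρ - β) / (2 * ρ) * ((ρ + β) / (2 * ρ)) = (ρ ^ 2 - β ^ 2) / (2 * ρ) ^ 2 := by
      field_simp; ring
    rw [this, hρsq]
    have h1 : (1 + β ^ 2 - β ^ 2) = 1 := by ring
    rw [h1]
    rw [show (1 : ℝ) / (2 * ρ) ^ 2 = (1 / (2 * ρ)) ^ 2 by ring]
    exact Real.sqrt_sq (by positivity)
  have hsum : C ^ 2 + S ^ 2 = 1 := by
    rw [hC2, hS2]; field_simp; ring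
  -- the rotated vectors
  set w : ι → ℝ := C • w₁ + S • w₂ with hw
  set v : ι → ℝ := S • w₁ + (-C) • w₂ with hv
  have hcross : w₁ ⬝ᵥ N *ᵥ w₂ + w₂ ⬝ᵥ N *ᵥ w₁ = 2 * β := by rw [hβ]; ring
  have hNw : Qf N w = 0 := by
    rw [hw, Qf_expand, hNw₁, hNw₂, hcross]
    rw [show C ^ 2 * 1 + C * S * (2 * β) + S ^ 2 * -1
        = (C ^ 2 - S ^ 2) + 2 * (C * S) * β from by ring, hC2, hS2, hCS]
    field_simp
    ring
  have hNv : Qf N v = 0 := by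
    rw [hv, Qf_expand, hNw₁, hNw₂, hcross]
    rw [show S ^ 2 * 1 + S * -C * (2 * β) + (-C) ^ 2 * -1
        = (S ^ 2 - C ^ 2) - 2 * (C * S) * β from by ring, hC2, hS2, hCS]
    field_simp
    ring
  have hMw : 0 ≤ Qf M w := h w (by rw [hNw])
  have hMv : 0 ≤ Qf M v := h v (by rw [hNv])
  have hMsum : Qf M w + Qf M v = Qf M w₁ + Qf M w₂ := by
    rw [hw, hv, Qf_expand, Qf_expand]
    linear_combination (Qf M w₁ + Qf M w₂) * hsum
  have key : 0 ≤ Qf M w₁ + Qf M w₂ := by linarith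
  have hMw₁ : Qf M w₁ = Qf M z₁ / Qf N z₁ := by
    rw [hw₁, Qf_smul, inv_pow, hsq₁]; field_simp
  have hMw₂ : Qf M w₂ = Qf M z₂ / (-Qf N z₂) := by
    rw [hw₂, Qf_smul, inv_pow, hsq₂]; field_simp
  rw [hMw₁, hMw₂] at key
  have h₂' : 0 < -Qf N z₂ := by linarith
  have k1 := mul_nonneg (mul_nonneg key h₁.le) h₂'.le
  have k2 : (Qf M z₁ / Qf N z₁ + Qf M z₂ / (-Qf N z₂)) * Qf N z₁ * (-Qf N z₂)
      = Qf M z₁ * (-Qf N z₂) + Qf M z₂ * Qf N z₁ := by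
    field_simp [h₁.ne', h₂.ne]
    ring
  linarith [k2 ▸ k1]

/-- S-lemma core: homogeneous S-procedure. -/
lemma slemma_core {ι : Type*} [Fintype ι] (M N : Matrix ι ι ℝ)
    (h : ∀ z, Qf N z ≤ 0 → 0 ≤ Qf M z) (z₀ : ι → ℝ) (h₀ : Qf N z₀ < 0) :
    ∃ ν : ℝ, 0 ≤ ν ∧ ∀ z, 0 ≤ Qf M z + ν * Qf N z := by
  set T : Set ℝ := {r | ∃ z, Qf N z < 0 ∧ r = Qf M z / (-Qf N z)} with hT
  have hTne : T.Nonempty := ⟨_, z₀, h₀, rfl⟩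
  have hTlb : ∀ r ∈ T, 0 ≤ r := by
    rintro r ⟨z, hz, rfl⟩
    have := h z hz.le
    exact div_nonneg this (by linarith)
  have hbdd : BddBelow T := ⟨0, fun r hr => hTlb r hr⟩
  refine ⟨sInf T, le_csInf hTne hTlb, fun z => ?_⟩
  rcases lt_trichotomy (Qf N z) 0 with hz | hz | hz
  · have hmem : Qf M z / (-Qf N z) ∈ T := ⟨z, hz, rfl⟩
    have hle : sInf T ≤ Qf M z / (-Qf N z) := csInf_le hbdd hmem
    have hpos : 0 < -Qf N z := by linarith
    have := (mul_le_mul_iff_of_pos_right hpos).2 hle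
    rw [div_mul_cancel₀ _ hpos.ne'] at this
    nlinarith [this]
  · rw [hz]; simpa using h z hz.le
  · have hlb : ∀ r ∈ T, -Qf M z / Qf N z ≤ r := by
      rintro r ⟨z', hz', rfl⟩
      have hp := pairwise_ineq M N h hz hz'
      rw [div_le_div_iff₀ hz (by linarith : (0:ℝ) < -Qf N z')]
      nlinarith [hp]
    have := (mul_le_mul_iff_of_pos_right hz).2 (le_csInf hTne hlb)
    rw [div_mul_cancel₀ _ hz.ne'] at this
    nlinarith [this]

/-- The vector `(y, t, τ)`. -/
def zvec {m : ℕ} (y : Fin m → ℝ) (t τ : ℝ) : Fin m ⊕ (Fin 1 ⊕ Fin 1) → ℝ :=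
  Sum.elim y (Sum.elim (fun _ => t) (fun _ => τ))

lemma zvec_surj {m : ℕ} (z : Fin m ⊕ (Fin 1 ⊕ Fin 1) → ℝ) :
    ∃ y t τ, z = zvec y t τ := by
  refine ⟨z ∘ Sum.inl, z (Sum.inr (Sum.inl 0)), z (Sum.inr (Sum.inr 0)), ?_⟩
  funext i
  rcases i with i | i
  · rfl
  · rcases i with i | i
    · rw [Subsingleton.elim i 0]; rfl
    · rw [Subsingleton.elim i 0]; rfl

lemma dot_transpose {k m : ℕ} (V : Matrix (Fin k) (Fin m) ℝ) (y : Fin m → ℝ) (u : Fin k → ℝ) :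
    y ⬝ᵥ (Vᵀ *ᵥ u) = (V *ᵥ y) ⬝ᵥ u := by
  simp only [dotProduct, Matrix.mulVec, Matrix.transpose_apply, Finset.mul_sum,
    Finset.sum_mul]
  rw [Finset.sum_comm]
  refine Finset.sum_congr rfl fun i _ => Finset.sum_congr rfl fun j _ => by ring

lemma transpose_dot {k m : ℕ} (V : Matrix (Fin k) (Fin m) ℝ) (y : Fin m → ℝ) (u : Fin k → ℝ) :
    (Vᵀ *ᵥ u) ⬝ᵥ y = (V *ᵥ y) ⬝ᵥ u := by
  rw [dotProduct_comm, dot_transpose]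

/-- The fundamental identity for the certificate matrix. -/
lemma cert_identity {n : ℕ} (A : Matrix (Fin n) (Fin n) ℝ) (hA : A.IsSymm)
    (a b : Fin n → ℝ) (c d α β ν : ℝ) (V : Matrix (Fin n) (Fin (n - 1)) ℝ)
    (hbb : b ⬝ᵥ b ≠ 0) (y : Fin (n - 1) → ℝ) (t τ : ℝ) :
    Qf (certMatrix A a b c d α β ν V) (zvec y t τ) =
      (V *ᵥ y + (t / (2 * (b ⬝ᵥ b))) • b) ⬝ᵥ A *ᵥ (V *ᵥ y + (t / (2 * (b ⬝ᵥ b))) • b)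
        + 2 * τ * (a ⬝ᵥ (V *ᵥ y + (t / (2 * (b ⬝ᵥ b))) • b)) + c * τ ^ 2
        + ν * ((t - (α - d) * τ) * (t - (β - d) * τ)) := by
  have hsymA : ∀ u : Fin n → ℝ, b ⬝ᵥ (A *ᵥ u) = u ⬝ᵥ (A *ᵥ b) := by
    intro u
    rw [Matrix.dotProduct_mulVec]
    have : b ᵥ* A = A *ᵥ b := by rw [← hA.eq, Matrix.vecMul_transpose, hA.eq]
    rw [this, dotProduct_comm]
  set r : Fin 1 ⊕ Fin 1 → ℝ := Sum.elim (fun _ => t) (fun _ => τ) with hr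
  have hz : zvec y t τ = Sum.elim y r := rfl
  rw [hz]
  set c₁ : Fin (n-1) → ℝ := (1 / (2 * (b ⬝ᵥ b))) • (Vᵀ *ᵥ (A *ᵥ b)) with hc₁
  set c₂ : Fin (n-1) → ℝ := Vᵀ *ᵥ a with hc₂
  rw [Qf, certMatrix, Matrix.fromBlocks_mulVec, sumElim_dotProduct_sumElim]
  have hcompl : (Sum.elim y r) ∘ Sum.inl = y := rfl
  have hcompr : (Sum.elim y r) ∘ Sum.inr = r := rfl
  rw [hcompl, hcompr]
  rw [dotProduct_add, dotProduct_add]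
  have hP : y ⬝ᵥ ((Vᵀ * A * V) *ᵥ y) = (V *ᵥ y) ⬝ᵥ (A *ᵥ (V *ᵥ y)) := by
    rw [show (Vᵀ * A * V) *ᵥ y = Vᵀ *ᵥ (A *ᵥ (V *ᵥ y)) by
      rw [Matrix.mulVec_mulVec, Matrix.mulVec_mulVec], dot_transpose]
  have hB : y ⬝ᵥ ((Matrix.of fun i (j : Fin 1 ⊕ Fin 1) =>
      Sum.elim (fun _ => c₁ i) (fun _ => c₂ i) j) *ᵥ r)
      = t * ((1 / (2 * (b ⬝ᵥ b))) * ((V *ᵥ y) ⬝ᵥ (A *ᵥ b))) + τ * ((V *ᵥ y) ⬝ᵥ a) := by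
    have e1 : (Matrix.of fun i (j : Fin 1 ⊕ Fin 1) =>
        Sum.elim (fun _ => c₁ i) (fun _ => c₂ i) j) *ᵥ r = t • c₁ + τ • c₂ := by
      funext i
      simp [Matrix.mulVec, dotProduct, Fintype.sum_sum_type, Fin.sum_univ_one, hr,
        mul_comm]
    rw [e1]
    simp only [dotProduct_add, dotProduct_smul, smul_eq_mul, hc₁, hc₂,
      dot_transpose]
  have hC : r ⬝ᵥ ((Matrix.of fun (i : Fin 1 ⊕ Fin 1) j =>
      Sum.elim (fun _ => c₁ j) (fun _ => c₂ j) i) *ᵥ y)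
      = t * ((1 / (2 * (b ⬝ᵥ b))) * ((V *ᵥ y) ⬝ᵥ (A *ᵥ b))) + τ * ((V *ᵥ y) ⬝ᵥ a) := by
    have e1 : (Matrix.of fun (i : Fin 1 ⊕ Fin 1) j =>
        Sum.elim (fun _ => c₁ j) (fun _ => c₂ j) i) *ᵥ y
        = Sum.elim (fun _ : Fin 1 => c₁ ⬝ᵥ y) (fun _ : Fin 1 => c₂ ⬝ᵥ y) := by
      funext i
      rcases i with i | i <;> rfl
    have f1 : ∀ p q : ℝ, (fun _ : Fin 1 => p) ⬝ᵥ (fun _ : Fin 1 => q) = p * q := fun p q => by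
      simp [dotProduct]
    rw [e1, hr, sumElim_dotProduct_sumElim, f1, f1, hc₁, hc₂,
      smul_dotProduct, smul_eq_mul, transpose_dot, transpose_dot]
  have hD : r ⬝ᵥ ((Matrix.fromBlocks
      (Matrix.of fun (_ _ : Fin 1) => b ⬝ᵥ (A *ᵥ b) / (2 * (b ⬝ᵥ b)) ^ 2 + ν)
      (Matrix.of fun (_ _ : Fin 1) => a ⬝ᵥ b / (2 * (b ⬝ᵥ b)) - ν / 2 * (α + β - 2 * d))
      (Matrix.of fun (_ _ : Fin 1) => a ⬝ᵥ b / (2 * (b ⬝ᵥ b)) - ν / 2 * (α + β - 2 * d))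
      (Matrix.of fun (_ _ : Fin 1) => c + ν * (α - d) * (β - d))) *ᵥ r)
      = t ^ 2 * (b ⬝ᵥ (A *ᵥ b) / (2 * (b ⬝ᵥ b)) ^ 2 + ν)
        + 2 * t * τ * (a ⬝ᵥ b / (2 * (b ⬝ᵥ b)) - ν / 2 * (α + β - 2 * d))
        + τ ^ 2 * (c + ν * (α - d) * (β - d)) := by
    rw [hr, Matrix.fromBlocks_mulVec, sumElim_dotProduct_sumElim]
    simp [Matrix.mulVec, dotProduct, Fin.sum_univ_one]
    ring
  rw [hP, hB, hC, hD]
  set w : Fin n → ℝ := V *ᵥ y with hw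
  set s : ℝ := t / (2 * (b ⬝ᵥ b)) with hs
  have hRHS : (w + s • b) ⬝ᵥ A *ᵥ (w + s • b)
      = w ⬝ᵥ (A *ᵥ w) + 2 * s * (w ⬝ᵥ (A *ᵥ b)) + s ^ 2 * (b ⬝ᵥ (A *ᵥ b)) := by
    rw [Matrix.mulVec_add, Matrix.mulVec_smul, dotProduct_add, add_dotProduct,
      add_dotProduct, dotProduct_smul, smul_dotProduct,
      smul_dotProduct, dotProduct_smul, hsymA w]
    simp only [smul_eq_mul]
    ring
  have hRHS2 : a ⬝ᵥ (w + s • b) = a ⬝ᵥ w + s * (a ⬝ᵥ b) := by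
    rw [dotProduct_add, dotProduct_smul, smul_eq_mul]
  rw [hRHS, hRHS2, hs]
  rw [dotProduct_comm a w, dotProduct_comm w (A *ᵥ b)] at *
  field_simp
  ring

lemma cert_isHermitian {n : ℕ} (A : Matrix (Fin n) (Fin n) ℝ) (hA : A.IsSymm)
    (a b : Fin n → ℝ) (c d α β ν : ℝ) (V : Matrix (Fin n) (Fin (n - 1)) ℝ) :
    (certMatrix A a b c d α β ν V).IsHermitian := by
  have hP : (Vᵀ * A * V)ᵀ = Vᵀ * A * V := by
    rw [Matrix.transpose_mul, Matrix.transpose_mul, Matrix.transpose_transpose, hA.eq,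
      Matrix.mul_assoc]
  show (certMatrix A a b c d α β ν V)ᴴ = _
  rw [Matrix.conjTranspose_eq_transpose_of_trivial]
  ext i j
  rcases i with i | i <;> rcases j with j | j
  · rw [Matrix.transpose_apply]
    show (Vᵀ * A * V) j i = (Vᵀ * A * V) i j
    conv_lhs => rw [← hP]
    rfl
  · rfl
  · rfl
  · rcases i with i | i <;> rcases j with j | j <;> rfl

/-- columns of `V` are in the kernel of `b ⬝ᵥ ·`. -/
lemma bdot_mulVec_eq_zero {n : ℕ} (b : Fin n → ℝ) (V : Matrix (Fin n) (Fin (n - 1)) ℝ)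
    (hVspan : (Submodule.span ℝ (Set.range fun j : Fin (n - 1) => fun i : Fin n => V i j)
      : Set (Fin n → ℝ)) = {x : Fin n → ℝ | b ⬝ᵥ x = 0})
    (y : Fin (n - 1) → ℝ) : b ⬝ᵥ (V *ᵥ y) = 0 := by
  have hmem : V *ᵥ y ∈ (Submodule.span ℝ
      (Set.range fun j : Fin (n - 1) => fun i : Fin n => V i j) : Set (Fin n → ℝ)) := by
    have he : V *ᵥ y = ∑ j, y j • (fun i : Fin n => V i j) := by
      funext i
      simp [Matrix.mulVec, dotProduct, Finset.sum_apply, mul_comm]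
    rw [he]
    exact Submodule.sum_mem _ fun j _ =>
      Submodule.smul_mem _ _ (Submodule.subset_span ⟨j, rfl⟩)
  rw [hVspan] at hmem
  exact hmem

lemma exists_decomp {n : ℕ} (b : Fin n → ℝ) (hb : b ≠ 0)
    (V : Matrix (Fin n) (Fin (n - 1)) ℝ)
    (hVspan : (Submodule.span ℝ (Set.range fun j : Fin (n - 1) => fun i : Fin n => V i j)
      : Set (Fin n → ℝ)) = {x : Fin n → ℝ | b ⬝ᵥ x = 0})
    (x : Fin n → ℝ) :
    ∃ y : Fin (n - 1) → ℝ, x = V *ᵥ y + ((b ⬝ᵥ x) / (b ⬝ᵥ b)) • b := by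
  have hbb : b ⬝ᵥ b ≠ 0 := fun h => hb (dotProduct_self_eq_zero.1 h)
  set s : ℝ := (b ⬝ᵥ x) / (b ⬝ᵥ b) with hs
  have hker : b ⬝ᵥ (x - s • b) = 0 := by
    rw [dotProduct_sub, dotProduct_smul, smul_eq_mul, hs]
    field_simp
    ring
  have hmem : x - s • b ∈ (Submodule.span ℝ
      (Set.range fun j : Fin (n - 1) => fun i : Fin n => V i j) : Set (Fin n → ℝ)) := by
    rw [hVspan]; exact hker
  rw [SetLike.mem_coe, Submodule.mem_span_range_iff_exists_fun] at hmem
  obtain ⟨y, hy⟩ := hmem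
  refine ⟨y, ?_⟩
  have he : V *ᵥ y = ∑ j, y j • (fun i : Fin n => V i j) := by
    funext i
    simp [Matrix.mulVec, dotProduct, Finset.sum_apply, mul_comm]
  rw [he, hy]
  abel

/-- S-lemma with interval bounds in the degenerate case `B = 0`, `b ≠ 0`:
unsolvability is equivalent to positive semidefiniteness of a certificate matrix. -/
theorem s_lemma_interval_degenerate_case (n : ℕ) (hn : 0 < n)
    (A B : Matrix (Fin n) (Fin n) ℝ) (hA : A.IsSymm) (hB : B.IsSymm)
    (a b : Fin n → ℝ) (c d : ℝ) (α β : ℝ) (hαβ : α < β)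
    (hB0 : B = 0) (hb : b ≠ 0)
    (V : Matrix (Fin n) (Fin (n - 1)) ℝ)
    (hVindep : LinearIndependent ℝ (fun j : Fin (n - 1) => fun i : Fin n => V i j))
    (hVspan : (Submodule.span ℝ (Set.range fun j : Fin (n - 1) => fun i : Fin n => V i j)
      : Set (Fin n → ℝ)) = {x : Fin n → ℝ | b ⬝ᵥ x = 0}) :
    (¬ ∃ x : Fin n → ℝ, qfun A a c x < 0 ∧ α ≤ qfun B b d x ∧ qfun B b d x ≤ β) ↔
      (∃ ν : ℝ, 0 ≤ ν ∧ (certMatrix A a b c d α β ν V).PosSemidef) := by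
  subst hB0
  have hbb : b ⬝ᵥ b ≠ 0 := fun h => hb (dotProduct_self_eq_zero.1 h)
  have hqB : ∀ x, qfun 0 b d x = 2 * (b ⬝ᵥ x) + d := by
    intro x; simp [qfun]
  have hcol := bdot_mulVec_eq_zero b V hVspan
  set M₀ := certMatrix A a b c d α β 0 V with hM₀
  set N := certMatrix A a b c d α β 1 V - M₀ with hN
  have hQN : ∀ (y : Fin (n-1) → ℝ) (t τ : ℝ),
      Qf N (zvec y t τ) = (t - (α - d) * τ) * (t - (β - d) * τ) := by
    intro y t τ
    have hNz : ∀ z, Qf N z = Qf (certMatrix A a b c d α β 1 V) z - Qf M₀ z := by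
      intro z
      simp [Qf, hN, Matrix.sub_mulVec, dotProduct_sub]
    rw [hNz, cert_identity A hA a b c d α β 1 V hbb y t τ,
      cert_identity A hA a b c d α β 0 V hbb y t τ]
    ring
  have hcombo : ∀ (ν : ℝ) (y : Fin (n-1) → ℝ) (t τ : ℝ),
      Qf (certMatrix A a b c d α β ν V) (zvec y t τ)
        = Qf M₀ (zvec y t τ) + ν * Qf N (zvec y t τ) := by
    intro ν y t τ
    rw [cert_identity A hA a b c d α β ν V hbb y t τ, hQN,
      hM₀, cert_identity A hA a b c d α β 0 V hbb y t τ]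
    ring
  constructor
  · -- forward direction
    intro H
    have Hf : ∀ x, α ≤ 2 * (b ⬝ᵥ x) + d → 2 * (b ⬝ᵥ x) + d ≤ β → 0 ≤ qfun A a c x := by
      intro x h1 h2
      by_contra hneg
      push_neg at hneg
      exact H ⟨x, hneg, by rw [hqB]; exact h1, by rw [hqB]; exact h2⟩
    have Hyt : ∀ (y : Fin (n-1) → ℝ) (t : ℝ), α - d ≤ t → t ≤ β - d →
        0 ≤ Qf M₀ (zvec y t 1) := by
      intro y t h1 h2
      set x := V *ᵥ y + (t / (2 * (b ⬝ᵥ b))) • b with hx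
      have hbx : 2 * (b ⬝ᵥ x) + d = t + d := by
        rw [hx, dotProduct_add, hcol, dotProduct_smul, smul_eq_mul]
        field_simp
        ring
      have hval := Hf x (by rw [hbx]; linarith) (by rw [hbx]; linarith)
      rw [hM₀, cert_identity A hA a b c d α β 0 V hbb y t 1]
      have hq : qfun A a c x = x ⬝ᵥ A *ᵥ x + 2 * (a ⬝ᵥ x) + c := rfl
      rw [hq, hx] at hval
      nlinarith [hval]
    have hcone : ∀ z, Qf N z ≤ 0 → 0 ≤ Qf M₀ z := by
      intro z hz
      obtain ⟨y, t, τ, rfl⟩ := zvec_surj z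
      rw [hQN] at hz
      by_cases hτ : τ = 0
      · subst hτ
        have ht0 : t = 0 := by nlinarith [hz]
        subst ht0
        have hdecomp : ∀ s : ℝ, zvec (s • y) (α - d) 1
            = s • zvec y 0 0 + (1:ℝ) • zvec (0 : Fin (n-1) → ℝ) (α - d) 1 := by
          intro s
          funext i
          rcases i with i | i
          · simp [zvec]
          · rcases i with i | i <;> simp [zvec]
        have hq : ∀ s : ℝ, 0 ≤ Qf M₀ (zvec y 0 0) * s ^ 2
            + (zvec y 0 0 ⬝ᵥ M₀ *ᵥ zvec (0 : Fin (n-1) → ℝ) (α - d) 1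
              + zvec (0 : Fin (n-1) → ℝ) (α - d) 1 ⬝ᵥ M₀ *ᵥ zvec y 0 0) * s
            + Qf M₀ (zvec (0 : Fin (n-1) → ℝ) (α - d) 1) := by
          intro s
          have h0 := Hyt (s • y) (α - d) le_rfl (by linarith)
          rw [hdecomp s, Qf_expand] at h0
          nlinarith [h0]
        exact quad_coeff_nonneg hq
      · have hzv : zvec y t τ = τ • zvec (τ⁻¹ • y) (t / τ) 1 := by
          funext i
          rcases i with i | i
          · simp [zvec, hτ]
          · rcases i with i | i <;> simp [zvec] <;> field_simp
        have ht' : (t / τ - (α - d)) * (t / τ - (β - d)) ≤ 0 := by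
          have he : (t / τ - (α - d)) * (t / τ - (β - d))
              = ((t - (α - d) * τ) * (t - (β - d) * τ)) / τ ^ 2 := by
            field_simp
          rw [he]
          exact div_nonpos_of_nonpos_of_nonneg hz (sq_nonneg τ)
        have h1 : α - d ≤ t / τ := by
          by_contra hcon
          push_neg at hcon
          nlinarith [ht']
        have h2 : t / τ ≤ β - d := by
          by_contra hcon
          push_neg at hcon
          nlinarith [ht']
        rw [hzv, Qf_smul]
        exact mul_nonneg (sq_nonneg τ) (Hyt _ _ h1 h2)
    have hneg : Qf N (zvec (0 : Fin (n-1) → ℝ) ((α - d + (β - d)) / 2) 1) < 0 := by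
      rw [hQN]
      nlinarith [hαβ]
    obtain ⟨ν, hν, hQ⟩ := slemma_core M₀ N hcone _ hneg
    refine ⟨ν, hν, Matrix.PosSemidef.of_dotProduct_mulVec_nonneg (cert_isHermitian A hA a b c d α β ν V) fun z => ?_⟩
    have hstar : star z = z := by
      funext i; simp
    rw [hstar]
    obtain ⟨y, t, τ, rfl⟩ := zvec_surj z
    have := hQ (zvec y t τ)
    rw [← hcombo ν y t τ] at this
    exact this
  · -- backward direction
    rintro ⟨ν, hν, hpsd⟩ ⟨x, hfx, h1, h2⟩
    rw [hqB] at h1 h2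
    obtain ⟨y, hx⟩ := exists_decomp b hb V hVspan x
    set t : ℝ := 2 * (b ⬝ᵥ x) with ht
    have hs : (b ⬝ᵥ x) / (b ⬝ᵥ b) = t / (2 * (b ⬝ᵥ b)) := by
      rw [ht]
      field_simp
    rw [hs] at hx
    have hp : (0:ℝ) ≤ Qf (certMatrix A a b c d α β ν V) (zvec y t 1) := by
      have := hpsd.dotProduct_mulVec_nonneg (zvec y t 1)
      have hstar : star (zvec y t 1) = zvec y t 1 := by funext i; simp
      rwa [hstar] at this
    rw [cert_identity A hA a b c d α β ν V hbb y t 1, ← hx] at hp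
    have hq : qfun A a c x = x ⬝ᵥ A *ᵥ x + 2 * (a ⬝ᵥ x) + c := rfl
    rw [hq] at hfx
    have hprod : (t - (α - d) * 1) * (t - (β - d) * 1) ≤ 0 :=
      mul_nonpos_iff.2 (Or.inl ⟨by linarith, by linarith⟩)
    nlinarith [mul_nonneg hν (neg_nonneg.2 hprod), hp, hfx]
end
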